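/- arXiv:1309.6085 — 4 statements merged into one kernel-verified Lean document; each statement's English description precedes it below -/
import Mathlib

section
/- An operator T : ℝⁿ → ℝᵐ is an abstract Uryson operator (orthogonally additive and order bounded) if and only if there exist functions T_{i,j} : ℝ → ℝ with T_{i,j}(0) = 0 for 1 ≤ i ≤ m, 1 ≤ j ≤ n, such that the i-th coordinate of T(x₁,…,xₙ) equals Σⱼ T_{i,j}(xⱼ) for all x ∈ ℝⁿ, and moreover T maps order bounded sets to order bounded sets. -/
/-- Orthogonal additivity: `T (x + y) = T x + T y` whenever `|x| ⊓ |y| = 0`. -/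
def OrthAdd {E F : Type*} [Lattice E] [AddCommGroup E] [AddCommGroup F]
    (T : E → F) : Prop :=
  ∀ x y : E, |x| ⊓ |y| = 0 → T (x + y) = T x + T y

/-- `T` maps order bounded sets to order bounded sets. -/
def OrderBoundedMap {E F : Type*} [Preorder E] [Preorder F] (T : E → F) : Prop :=
  ∀ a b : E, ∃ c d : F, ∀ x ∈ Set.Icc a b, T x ∈ Set.Icc c d

/-- An abstract Uryson operator: orthogonally additive and order bounded. -/
def Uryson {E F : Type*} [Lattice E] [AddCommGroup E] [Lattice F] [AddCommGroup F]
    (T : E → F) : Prop :=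
  OrthAdd T ∧ OrderBoundedMap T

/-- `T : ℝⁿ → ℝᵐ` (with coordinatewise order) is an abstract Uryson operator iff there
are functions `Tᵢⱼ : ℝ → ℝ` with `Tᵢⱼ 0 = 0` such that the `i`-th coordinate of `T x`
is `∑ⱼ Tᵢⱼ (xⱼ)`, and moreover `T` maps order bounded sets to order bounded sets. -/
theorem stmt2 (n m : ℕ) (T : (Fin n → ℝ) → (Fin m → ℝ)) :
    Uryson T ↔
      ((∃ Tij : Fin m → Fin n → ℝ → ℝ,
          (∀ i j, Tij i j 0 = 0) ∧
          ∀ (x : Fin n → ℝ) (i : Fin m), T x i = ∑ j, Tij i j (x j)) ∧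
        OrderBoundedMap T) := by
  constructor
  · rintro ⟨hadd, hbd⟩
    refine ⟨⟨fun i j t => T (Pi.single j t) i, ?_, ?_⟩, hbd⟩
    · have h0 : T 0 = 0 := by
        have := hadd 0 0 (by simp)
        simpa using this.symm
      intro i j
      simp [Pi.single_zero, h0]
    · have h0 : T 0 = 0 := by
        have := hadd 0 0 (by simp)
        simpa using this.symm
      have key : ∀ (x : Fin n → ℝ) (s : Finset (Fin n)),
          T (∑ j ∈ s, Pi.single j (x j)) = ∑ j ∈ s, T (Pi.single j (x j)) := by
        intro x s
        induction s using Finset.induction with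
        | empty => simpa using h0
        | @insert a s ha ih =>
          rw [Finset.sum_insert ha, Finset.sum_insert ha, ← ih]
          apply hadd
          funext k
          have habs : ∀ f g : Fin n → ℝ, (|f| ⊓ |g|) k = |f k| ⊓ |g k| := fun f g => rfl
          rw [habs]
          by_cases hk : k = a
          · subst hk
            have : (∑ j ∈ s, Pi.single j (x j)) k = 0 := by
              rw [Finset.sum_apply]
              apply Finset.sum_eq_zero
              intro j hj
              exact Pi.single_eq_of_ne (by rintro rfl; exact ha hj) _
            simp [this]
          · have : (Pi.single a (x a) : Fin n → ℝ) k = 0 := Pi.single_eq_of_ne hk _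
            simp [this]
      intro x i
      have := key x Finset.univ
      rw [Finset.univ_sum_single] at this
      rw [this, Finset.sum_apply]
  · rintro ⟨⟨Tij, hTij0, hrep⟩, hbd⟩
    refine ⟨?_, hbd⟩
    intro x y hxy
    funext i
    simp only [Pi.add_apply]
    rw [hrep, hrep, hrep]
    have : ∀ j : Fin n, Tij i j ((x + y) j) = Tij i j (x j) + Tij i j (y j) := by
      intro j
      have h := congrFun hxy j
      have h' : |x j| ⊓ |y j| = 0 := h
      rcases min_cases |x j| |y j| with ⟨he, _⟩ | ⟨he, _⟩
      · have hx : x j = 0 := abs_eq_zero.mp (by rw [← he]; exact h')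
        simp [hx, hTij0]
      · have hy : y j = 0 := abs_eq_zero.mp (by rw [← he]; exact h')
        simp [hy, hTij0]
    rw [← Finset.sum_add_distrib]
    exact Finset.sum_congr rfl fun j _ => this j
end

section
/- Let E, F be vector lattices with F Dedekind complete. For abstract Uryson operators S, T : E → F and any f ∈ E, the supremum T ∨ S in the ordered vector space of abstract Uryson operators exists and satisfies (T ∨ S)(f) = sup{ Tg + Sh : f = g + h, g ⊥ h }. -/
/-- `z` is a fragment (component) of `x`: `z ⊥ (x - z)`. -/
def Fragment {E : Type*} [Lattice E] [AddCommGroup E] (z x : E) : Prop :=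
  |z| ⊓ |x - z| = 0

set_option linter.unusedSectionVars false

section Helpers
variable {G : Type*} [Lattice G] [AddCommGroup G] [CovariantClass G G (· + ·) (· ≤ ·)]

private lemma infSupDistrib (a b c : G) : a ⊓ (b ⊔ c) = (a ⊓ b) ⊔ (a ⊓ c) := by
  letI := AddCommGroup.toDistribLattice G
  exact inf_sup_left a b c

private lemma disjMono {a b a' b' : G} (ha' : 0 ≤ a') (hb' : 0 ≤ b')
    (haa : a' ≤ a) (hbb : b' ≤ b) (h : a ⊓ b = 0) : a' ⊓ b' = 0 :=
  le_antisymm (le_trans (inf_le_inf haa hbb) h.le) (le_inf ha' hb')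

private lemma supEqAdd {p q : G} (h : p ⊓ q = 0) : p ⊔ q = p + q := by
  have h2 := inf_add_sup p q
  rw [h, zero_add] at h2
  exact h2

private lemma posPartSub {p q : G} (h : p ⊓ q = 0) : (p - q)⁺ = p := by
  have h1 : (p - q) ⊔ 0 = (p ⊔ q) - q := by rw [sup_sub]; simp
  rw [posPart_def, h1, supEqAdd h, add_sub_cancel_right]

private lemma negPartSub {p q : G} (h : p ⊓ q = 0) : (p - q)⁻ = q := by
  rw [← posPart_neg, neg_sub]
  exact posPartSub (by rw [inf_comm]; exact h)

private lemma absSub {p q : G} (h : p ⊓ q = 0) : |p - q| = p + q := by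
  rw [← posPart_add_negPart (p - q), posPartSub h, negPartSub h]

private lemma posPartLeAbs (a : G) : a⁺ ≤ |a| := by
  rw [posPart_def]
  exact sup_le (le_abs_self a) (abs_nonneg a)

private lemma negPartLeAbs (a : G) : a⁻ ≤ |a| := by
  rw [negPart_def]
  exact sup_le (neg_le_abs a) (abs_nonneg a)

private lemma infAddInf {u v w : G} (hu : 0 ≤ u) (hv : 0 ≤ v) (hw : 0 ≤ w) :
    (u + v) ⊓ w ≤ u ⊓ w + v ⊓ w := by
  have e1 : (u ⊓ w) + v = (u + v) ⊓ (w + v) := inf_add u w v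
  have e2 : (u ⊓ w) + w = (u + w) ⊓ (w + w) := inf_add u w w
  have e3 : (u ⊓ w) + v ⊓ w = ((u ⊓ w) + v) ⊓ ((u ⊓ w) + w) := add_inf v w (u ⊓ w)
  have h1 : (u + v) ⊓ w ≤ (u + v) ⊓ (w + v) :=
    inf_le_inf_left _ (le_add_of_nonneg_right hv)
  have h2 : (u + v) ⊓ w ≤ (u + w) ⊓ (w + w) :=
    le_inf (inf_le_right.trans (le_add_of_nonneg_left hu))
      (inf_le_right.trans (le_add_of_nonneg_left hw))
  rw [e3]
  exact le_inf (by rw [e1]; exact h1) (by rw [e2]; exact h2)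

/-- disjoint sum stays disjoint -/
private lemma disjSum {a b c : G} (ha : 0 ≤ a) (hb : 0 ≤ b) (hc : 0 ≤ c)
    (h1 : a ⊓ c = 0) (h2 : b ⊓ c = 0) : (a + b) ⊓ c = 0 :=
  le_antisymm ((infAddInf ha hb hc).trans (by rw [h1, h2, add_zero]))
    (le_inf (add_nonneg ha hb) hc)

private lemma absAddDisj {g₁ g₂ h₁ h₂ : G} (h11 : |g₁| ⊓ |h₁| = 0) (h12 : |g₁| ⊓ |h₂| = 0)
    (h21 : |g₂| ⊓ |h₁| = 0) (h22 : |g₂| ⊓ |h₂| = 0) : |g₁ + g₂| ⊓ |h₁ + h₂| = 0 := by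
  have k1 : |g₁| ⊓ (|h₁| + |h₂|) = 0 := by
    rw [inf_comm]
    exact disjSum (abs_nonneg _) (abs_nonneg _) (abs_nonneg _)
      (by rw [inf_comm]; exact h11) (by rw [inf_comm]; exact h12)
  have k2 : |g₂| ⊓ (|h₁| + |h₂|) = 0 := by
    rw [inf_comm]
    exact disjSum (abs_nonneg _) (abs_nonneg _) (abs_nonneg _)
      (by rw [inf_comm]; exact h21) (by rw [inf_comm]; exact h22)
  have k3 : (|g₁| + |g₂|) ⊓ (|h₁| + |h₂|) = 0 :=
    disjSum (abs_nonneg _) (abs_nonneg _) (add_nonneg (abs_nonneg _) (abs_nonneg _)) k1 k2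
  exact le_antisymm (le_trans (inf_le_inf (abs_add_le _ _) (abs_add_le _ _)) k3.le)
    (le_inf (abs_nonneg _) (abs_nonneg _))

private lemma posPartAddDisj {a b : G} (h : |a| ⊓ |b| = 0) :
    (a + b)⁺ = a⁺ + b⁺ ∧ (a + b)⁻ = a⁻ + b⁻ ∧ |a + b| = |a| + |b| := by
  have hPQ : (a⁺ + b⁺) ⊓ (a⁻ + b⁻) = 0 := by
    have d1 : a⁺ ⊓ (a⁻ + b⁻) = 0 := by
      rw [inf_comm]
      refine disjSum (negPart_nonneg a) (negPart_nonneg b) (posPart_nonneg a) ?_ ?_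
      · rw [inf_comm]; exact posPart_inf_negPart_eq_zero a
      · rw [inf_comm]
        exact disjMono (posPart_nonneg a) (negPart_nonneg b) (posPartLeAbs a) (negPartLeAbs b) h
    have d2 : b⁺ ⊓ (a⁻ + b⁻) = 0 := by
      rw [inf_comm]
      refine disjSum (negPart_nonneg a) (negPart_nonneg b) (posPart_nonneg b) ?_ ?_
      · rw [inf_comm]
        exact disjMono (posPart_nonneg b) (negPart_nonneg a) (posPartLeAbs b) (negPartLeAbs a)
          (by rw [inf_comm]; exact h)
      · rw [inf_comm]; exact posPart_inf_negPart_eq_zero b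
    exact disjSum (posPart_nonneg a) (posPart_nonneg b)
      (add_nonneg (negPart_nonneg a) (negPart_nonneg b)) d1 d2
  have hab : a + b = (a⁺ + b⁺) - (a⁻ + b⁻) := by
    have e : (a⁺ + b⁺) - (a⁻ + b⁻) = (a⁺ - a⁻) + (b⁺ - b⁻) := by abel
    rw [e, posPart_sub_negPart, posPart_sub_negPart]
  refine ⟨?_, ?_, ?_⟩
  · rw [hab]; exact posPartSub hPQ
  · rw [hab]; exact negPartSub hPQ
  · rw [hab, absSub hPQ]
    have e : a⁺ + b⁺ + (a⁻ + b⁻) = (a⁺ + a⁻) + (b⁺ + b⁻) := by abel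
    rw [e, posPart_add_negPart, posPart_add_negPart]

/-- `p ⊓ r + q ⊓ r = (p + q) ⊓ r` for nonneg `p q r` with `p ⊓ q = 0`. -/
private lemma infPair {p q r : G} (hp : 0 ≤ p) (hq : 0 ≤ q) (hr : 0 ≤ r)
    (hpq : p ⊓ q = 0) : p ⊓ r + q ⊓ r = (p + q) ⊓ r := by
  have hd : (p ⊓ r) ⊓ (q ⊓ r) = 0 :=
    disjMono (le_inf hp hr) (le_inf hq hr) inf_le_left inf_le_left hpq
  rw [← supEqAdd hd, inf_comm p r, inf_comm q r, ← infSupDistrib, supEqAdd hpq, inf_comm]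

end Helpers

section Helpers2
variable {G : Type*} [Lattice G] [AddCommGroup G] [CovariantClass G G (· + ·) (· ≤ ·)]

private lemma infAbsSelf {x y : G} (hxy : |x| ⊓ |y| = 0) :
    (x⁺ + y⁺) ⊓ |x| = x⁺ ∧ (x⁻ + y⁻) ⊓ |x| = x⁻ := by
  have hy : y⁺ ⊓ x⁻ = 0 := disjMono (posPart_nonneg y) (negPart_nonneg x)
    (posPartLeAbs y) (negPartLeAbs x) (by rw [inf_comm]; exact hxy)
  have hy' : y⁻ ⊓ x⁺ = 0 := disjMono (negPart_nonneg y) (posPart_nonneg x)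
    (negPartLeAbs y) (posPartLeAbs x) (by rw [inf_comm]; exact hxy)
  constructor
  · apply le_antisymm
    · have e : (x⁺ + y⁺) ⊓ |x| = x⁺ + y⁺ ⊓ x⁻ := by
        rw [← posPart_add_negPart x]
        exact (add_inf y⁺ x⁻ x⁺).symm
      rw [e, hy, add_zero]
    · exact le_inf (le_add_of_nonneg_right (posPart_nonneg y)) (posPartLeAbs x)
  · apply le_antisymm
    · have e : (x⁻ + y⁻) ⊓ |x| = x⁻ + y⁻ ⊓ x⁺ := by
        rw [← posPart_add_negPart x, add_comm x⁺ x⁻]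
        exact (add_inf y⁻ x⁺ x⁻).symm
      rw [e, hy', add_zero]
    · exact le_inf (le_add_of_nonneg_right (negPart_nonneg y)) (negPartLeAbs x)

private lemma compAbs (z w : G) : abs (z⁺ ⊓ |w| - z⁻ ⊓ |w|) = |z| ⊓ |w| := by
  have hd : (z⁺ ⊓ |w|) ⊓ (z⁻ ⊓ |w|) = 0 :=
    disjMono (le_inf (posPart_nonneg z) (abs_nonneg w)) (le_inf (negPart_nonneg z) (abs_nonneg w))
      inf_le_left inf_le_left (posPart_inf_negPart_eq_zero z)
  rw [absSub hd, infPair (posPart_nonneg z) (negPart_nonneg z) (abs_nonneg w)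
    (posPart_inf_negPart_eq_zero z), posPart_add_negPart]

private lemma fragSplit {x y g h : G} (hxy : |x| ⊓ |y| = 0) (hgh : |g| ⊓ |h| = 0)
    (hsum : g + h = x + y) :
    ∃ g₁ g₂ h₁ h₂ : G, g = g₁ + g₂ ∧ h = h₁ + h₂ ∧ x = g₁ + h₁ ∧ y = g₂ + h₂ ∧
      |g₁| ⊓ |g₂| = 0 ∧ |h₁| ⊓ |h₂| = 0 ∧ |g₁| ⊓ |h₁| = 0 ∧ |g₂| ⊓ |h₂| = 0 := by
  obtain ⟨hgP, hgN, hgA⟩ := posPartAddDisj hgh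
  obtain ⟨hxP, hxN, hxA⟩ := posPartAddDisj hxy
  -- bound : |g| and |h| are below |x| + |y|
  have hBound : ∀ z : G, |z| ≤ |g| + |h| → |z| ≤ |x| + |y| := by
    intro z hz
    calc |z| ≤ |g| + |h| := hz
      _ = |g + h| := hgA.symm
      _ = |x + y| := by rw [hsum]
      _ = |x| + |y| := hxA
  have hgle : |g| ≤ |x| + |y| := hBound g (le_add_of_nonneg_right (abs_nonneg h))
  have hhle : |h| ≤ |x| + |y| := hBound h (le_add_of_nonneg_left (abs_nonneg g))
  -- z = z ⊓ |x| parts sum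
  have hzsplit : ∀ z : G, |z| ≤ |x| + |y| →
      (z⁺ ⊓ |x| - z⁻ ⊓ |x|) + (z⁺ ⊓ |y| - z⁻ ⊓ |y|) = z := by
    intro z hzle
    have e1 : z⁺ ⊓ |x| + z⁺ ⊓ |y| = z⁺ := by
      have e := infPair (abs_nonneg x) (abs_nonneg y) (posPart_nonneg z) hxy
      rw [inf_comm (|x|) z⁺, inf_comm (|y|) z⁺] at e
      rw [e, inf_comm]
      exact inf_eq_left.2 ((posPartLeAbs z).trans hzle)
    have e2 : z⁻ ⊓ |x| + z⁻ ⊓ |y| = z⁻ := by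
      have e := infPair (abs_nonneg x) (abs_nonneg y) (negPart_nonneg z) hxy
      rw [inf_comm (|x|) z⁻, inf_comm (|y|) z⁻] at e
      rw [e, inf_comm]
      exact inf_eq_left.2 ((negPartLeAbs z).trans hzle)
    rw [sub_add_sub_comm, e1, e2, posPart_sub_negPart]
  -- disjointness of positive parts of g and h
  have hP : g⁺ ⊓ h⁺ = 0 := disjMono (posPart_nonneg g) (posPart_nonneg h)
    (posPartLeAbs g) (posPartLeAbs h) hgh
  have hN : g⁻ ⊓ h⁻ = 0 := disjMono (negPart_nonneg g) (negPart_nonneg h)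
    (negPartLeAbs g) (negPartLeAbs h) hgh
  refine ⟨g⁺ ⊓ |x| - g⁻ ⊓ |x|, g⁺ ⊓ |y| - g⁻ ⊓ |y|,
          h⁺ ⊓ |x| - h⁻ ⊓ |x|, h⁺ ⊓ |y| - h⁻ ⊓ |y|, ?_, ?_, ?_, ?_, ?_, ?_, ?_, ?_⟩
  · exact (hzsplit g hgle).symm
  · exact (hzsplit h hhle).symm
  · rw [sub_add_sub_comm, infPair (posPart_nonneg g) (posPart_nonneg h) (abs_nonneg x) hP,
      infPair (negPart_nonneg g) (negPart_nonneg h) (abs_nonneg x) hN,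
      ← hgP, ← hgN, hsum, hxP, hxN, (infAbsSelf hxy).1, (infAbsSelf hxy).2,
      posPart_sub_negPart]
  · have hxy' : |y| ⊓ |x| = 0 := by rw [inf_comm]; exact hxy
    rw [sub_add_sub_comm, infPair (posPart_nonneg g) (posPart_nonneg h) (abs_nonneg y) hP,
      infPair (negPart_nonneg g) (negPart_nonneg h) (abs_nonneg y) hN,
      ← hgP, ← hgN, hsum, hxP, hxN, add_comm x⁺ y⁺, add_comm x⁻ y⁻,
      (infAbsSelf hxy').1, (infAbsSelf hxy').2, posPart_sub_negPart]
  · rw [compAbs, compAbs]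
    exact disjMono (le_inf (abs_nonneg g) (abs_nonneg x))
      (le_inf (abs_nonneg g) (abs_nonneg y)) inf_le_right inf_le_right hxy
  · rw [compAbs, compAbs]
    exact disjMono (le_inf (abs_nonneg h) (abs_nonneg x))
      (le_inf (abs_nonneg h) (abs_nonneg y)) inf_le_right inf_le_right hxy
  · rw [compAbs, compAbs]
    exact disjMono (le_inf (abs_nonneg g) (abs_nonneg x))
      (le_inf (abs_nonneg h) (abs_nonneg x)) inf_le_left inf_le_left hgh
  · rw [compAbs, compAbs]
    exact disjMono (le_inf (abs_nonneg g) (abs_nonneg y))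
      (le_inf (abs_nonneg h) (abs_nonneg y)) inf_le_left inf_le_left hgh

end Helpers2

/-- The set of values `T g + S h` over disjoint decompositions `f = g + h`. -/
private def ASet {E F : Type*} [Lattice E] [AddCommGroup E] [AddCommGroup F]
    (T S : E → F) (f : E) : Set F :=
  {v : F | ∃ g h : E, f = g + h ∧ |g| ⊓ |h| = 0 ∧ v = T g + S h}

/-- Mazón–Segura de León: if `F` is Dedekind complete then for abstract Uryson operators
`S, T : E → F` the supremum `T ∨ S` exists in the ordered vector space `U(E,F)`
(ordered by `S ≤ T` iff `T - S` is positive, i.e. pointwise) and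
`(T ∨ S)(f) = sup { T g + S h : f = g + h, g ⊥ h }`. -/
theorem stmt3 {E F : Type*} [Lattice E] [AddCommGroup E]
    [CovariantClass E E (· + ·) (· ≤ ·)] [Module ℝ E]
    [ConditionallyCompleteLattice F] [AddCommGroup F]
    [CovariantClass F F (· + ·) (· ≤ ·)] [Module ℝ F]
    (S T : E → F) (hS : Uryson S) (hT : Uryson T) :
    ∃ R : E → F, Uryson R ∧
      (∀ x, T x ≤ R x) ∧ (∀ x, S x ≤ R x) ∧
      (∀ U : E → F, Uryson U → (∀ x, T x ≤ U x) → (∀ x, S x ≤ U x) → ∀ x, R x ≤ U x) ∧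
      ∀ f : E, R f = sSup {v : F | ∃ g h : E, f = g + h ∧ |g| ⊓ |h| = 0 ∧ v = T g + S h} := by
  classical
  obtain ⟨hTo, hTb⟩ := hT
  obtain ⟨hSo, hSb⟩ := hS
  have hS0 : S 0 = 0 := by
    have h0 := hSo 0 0 (by simp)
    rw [add_zero] at h0
    exact (left_eq_add.mp h0)
  have hT0 : T 0 = 0 := by
    have h0 := hTo 0 0 (by simp)
    rw [add_zero] at h0
    exact (left_eq_add.mp h0)
  have habs0 : ∀ f : E, |f| ⊓ |(0 : E)| = 0 := fun f => by
    rw [abs_zero]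
    exact inf_eq_right.2 (abs_nonneg f)
  have habs0' : ∀ f : E, |(0 : E)| ⊓ |f| = 0 := fun f => by
    rw [inf_comm]; exact habs0 f
  have hmemT : ∀ f : E, T f ∈ ASet T S f := fun f =>
    ⟨f, 0, (add_zero f).symm, habs0 f, by rw [hS0, add_zero]⟩
  have hmemS : ∀ f : E, S f ∈ ASet T S f := fun f =>
    ⟨0, f, (zero_add f).symm, habs0' f, by rw [hT0, zero_add]⟩
  have hne : ∀ f : E, (ASet T S f).Nonempty := fun f => ⟨T f, hmemT f⟩
  have hfragIcc : ∀ {f g h : E}, f = g + h → |g| ⊓ |h| = 0 → g ∈ Set.Icc (-|f|) |f| := by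
    intro f g h hf hgh
    have h1 : |g| ≤ |f| := by
      rw [hf, (posPartAddDisj hgh).2.2]
      exact le_add_of_nonneg_right (abs_nonneg h)
    exact ⟨le_trans (neg_le_neg_iff.mpr h1) (neg_le.mpr (neg_le_abs g)), le_trans (le_abs_self g) h1⟩
  have hfragIcc' : ∀ {f g h : E}, f = g + h → |g| ⊓ |h| = 0 → h ∈ Set.Icc (-|f|) |f| := by
    intro f g h hf hgh
    exact hfragIcc (by rw [hf, add_comm]) (by rw [inf_comm]; exact hgh)
  have hbdd : ∀ f : E, BddAbove (ASet T S f) := by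
    intro f
    obtain ⟨cT, dT, hdT⟩ := hTb (-|f|) |f|
    obtain ⟨cS, dS, hdS⟩ := hSb (-|f|) |f|
    refine ⟨dT + dS, ?_⟩
    rintro v ⟨g, h, hf, hgh, rfl⟩
    exact add_le_add (hdT g (hfragIcc hf hgh)).2 (hdS h (hfragIcc' hf hgh)).2
  have hTleR : ∀ x : E, T x ≤ sSup (ASet T S x) := fun x => le_csSup (hbdd x) (hmemT x)
  have hSleR : ∀ x : E, S x ≤ sSup (ASet T S x) := fun x => le_csSup (hbdd x) (hmemS x)
  refine ⟨fun f => sSup (ASet T S f), ⟨?_, ?_⟩, hTleR, hSleR, ?_, fun f => rfl⟩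
  · -- orthogonal additivity
    intro x y hxy
    apply le_antisymm
    · apply csSup_le (hne _)
      rintro v ⟨g, h, hf, hgh, rfl⟩
      obtain ⟨g₁, g₂, h₁, h₂, hg12, hh12, hx12, hy12, dg, dh, d1, d2⟩ :=
        fragSplit hxy hgh hf.symm
      have hv : T g + S h = (T g₁ + S h₁) + (T g₂ + S h₂) := by
        rw [hg12, hh12, hTo g₁ g₂ dg, hSo h₁ h₂ dh]; abel
      rw [hv]
      exact add_le_add (le_csSup (hbdd x) ⟨g₁, h₁, hx12, d1, rfl⟩)
        (le_csSup (hbdd y) ⟨g₂, h₂, hy12, d2, rfl⟩)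
    · have hmem : ∀ a ∈ ASet T S x, ∀ b ∈ ASet T S y, a + b ∈ ASet T S (x + y) := by
        rintro a ⟨g₁, h₁, hx1, d1, rfl⟩ b ⟨g₂, h₂, hy2, d2, rfl⟩
        have bg1 : |g₁| ≤ |x| := by
          rw [hx1, (posPartAddDisj d1).2.2]; exact le_add_of_nonneg_right (abs_nonneg _)
        have bh1 : |h₁| ≤ |x| := by
          rw [hx1, (posPartAddDisj d1).2.2]; exact le_add_of_nonneg_left (abs_nonneg _)
        have bg2 : |g₂| ≤ |y| := by
          rw [hy2, (posPartAddDisj d2).2.2]; exact le_add_of_nonneg_right (abs_nonneg _)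
        have bh2 : |h₂| ≤ |y| := by
          rw [hy2, (posPartAddDisj d2).2.2]; exact le_add_of_nonneg_left (abs_nonneg _)
        have dgg : |g₁| ⊓ |g₂| = 0 := disjMono (abs_nonneg _) (abs_nonneg _) bg1 bg2 hxy
        have dhh : |h₁| ⊓ |h₂| = 0 := disjMono (abs_nonneg _) (abs_nonneg _) bh1 bh2 hxy
        have d12 : |g₁| ⊓ |h₂| = 0 := disjMono (abs_nonneg _) (abs_nonneg _) bg1 bh2 hxy
        have d21 : |g₂| ⊓ |h₁| = 0 := disjMono (abs_nonneg _) (abs_nonneg _) bg2 bh1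
          (by rw [inf_comm]; exact hxy)
        refine ⟨g₁ + g₂, h₁ + h₂, ?_, absAddDisj d1 d12 d21 d2, ?_⟩
        · rw [hx1, hy2]; abel
        · rw [hTo g₁ g₂ dgg, hSo h₁ h₂ dhh]; abel
      have step : ∀ a ∈ ASet T S x, a + sSup (ASet T S y) ≤ sSup (ASet T S (x + y)) := by
        intro a ha
        rw [← le_sub_iff_add_le']
        apply csSup_le (hne y)
        intro b hb
        rw [le_sub_iff_add_le']
        exact le_csSup (hbdd _) (hmem a ha b hb)
      have hfin : sSup (ASet T S x) ≤ sSup (ASet T S (x + y)) - sSup (ASet T S y) := by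
        apply csSup_le (hne x)
        intro a ha
        rw [le_sub_iff_add_le]
        exact step a ha
      rw [← le_sub_iff_add_le]
      exact hfin
  · -- order boundedness
    intro a b
    obtain ⟨cT, dT, hdT⟩ := hTb (-(|a| ⊔ |b|)) (|a| ⊔ |b|)
    obtain ⟨cS, dS, hdS⟩ := hSb (-(|a| ⊔ |b|)) (|a| ⊔ |b|)
    refine ⟨cT, dT + dS, ?_⟩
    intro x hx
    have hxm : |x| ≤ |a| ⊔ |b| := abs_le'.mpr
      ⟨hx.2.trans ((le_abs_self b).trans le_sup_right),
        (neg_le_neg_iff.mpr hx.1).trans ((neg_le_abs a).trans le_sup_left)⟩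
    have hxI : x ∈ Set.Icc (-(|a| ⊔ |b|)) (|a| ⊔ |b|) :=
      ⟨neg_le.mp ((neg_le_abs x).trans hxm), (le_abs_self x).trans hxm⟩
    constructor
    · exact le_trans (hdT x hxI).1 (hTleR x)
    · apply csSup_le (hne x)
      rintro v ⟨g, h, hf, hgh, rfl⟩
      have hsub : Set.Icc (-|x|) |x| ⊆ Set.Icc (-(|a| ⊔ |b|)) (|a| ⊔ |b|) :=
        Set.Icc_subset_Icc (neg_le_neg_iff.mpr hxm) hxm
      exact add_le_add (hdT g (hsub (hfragIcc hf hgh))).2 (hdS h (hsub (hfragIcc' hf hgh))).2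
  · -- minimality
    intro U hU hTU hSU x
    apply csSup_le (hne x)
    rintro v ⟨g, h, hf, hgh, rfl⟩
    calc T g + S h ≤ U g + U h := add_le_add (hTU g) (hSU h)
      _ = U (g + h) := (hU.1 g h hgh).symm
      _ = U x := by rw [← hf]
end

section
/- Let E, F be vector lattices with F Dedekind complete. For an abstract Uryson operator T : E → F and f ∈ E, the positive part T⁺ in U(E,F) satisfies T⁺(f) = sup{ Tg : g ⊑ f }, where g ⊑ f means g is a fragment of f. -/
set_option linter.unusedSectionVars false
set_option linter.unusedVariables false

section LatGrp
variable {E : Type*} [Lattice E] [AddCommGroup E] [CovariantClass E E (· + ·) (· ≤ ·)]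

lemma aux_posPart_le_abs (a : E) : a⁺ ≤ |a| :=
  (le_add_of_nonneg_right (negPart_nonneg a)).trans_eq (posPart_add_negPart a)

lemma aux_negPart_le_abs (a : E) : a⁻ ≤ |a| :=
  (le_add_of_nonneg_left (posPart_nonneg a)).trans_eq (posPart_add_negPart a)

/-- Riesz inequality. -/
lemma aux_riesz (z a b : E) (hz : 0 ≤ z) (ha : 0 ≤ a) (hb : 0 ≤ b) :
    z ⊓ (a + b) ≤ z ⊓ a + z ⊓ b := by
  have h1 : z ⊓ (a + b) - z ⊓ a = (z ⊓ (a + b) - z) ⊔ (z ⊓ (a + b) - a) := sub_inf _ _ _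
  have h2 : z ⊓ (a + b) - z ⊓ a ≤ z ⊓ b := by
    rw [h1]
    refine sup_le (le_inf ?_ ?_) (le_inf ?_ ?_)
    · exact (sub_nonpos.mpr inf_le_left).trans hz
    · exact (sub_nonpos.mpr inf_le_left).trans hb
    · exact (sub_le_sub_right inf_le_left a).trans (sub_le_self z ha)
    · exact sub_le_iff_le_add'.mpr inf_le_right
  exact sub_le_iff_le_add'.mp h2

lemma aux_inf0 {p q P Q : E} (hp : 0 ≤ p) (hq : 0 ≤ q) (hP : p ≤ P) (hQ : q ≤ Q)
    (h : P ⊓ Q = 0) : p ⊓ q = 0 :=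
  le_antisymm ((inf_le_inf hP hQ).trans_eq h) (le_inf hp hq)

lemma aux_add_disj {p q r s : E} (hp : 0 ≤ p) (hq : 0 ≤ q) (hr : 0 ≤ r) (hs : 0 ≤ s)
    (h1 : p ⊓ r = 0) (h2 : p ⊓ s = 0) (h3 : q ⊓ r = 0) (h4 : q ⊓ s = 0) :
    (p + q) ⊓ (r + s) = 0 := by
  refine le_antisymm ?_ (le_inf (add_nonneg hp hq) (add_nonneg hr hs))
  have step1 : (p + q) ⊓ (r + s) ≤ (p + q) ⊓ r + (p + q) ⊓ s :=
    aux_riesz _ _ _ (add_nonneg hp hq) hr hs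
  have e1 : (p + q) ⊓ r = 0 := by
    refine le_antisymm ?_ (le_inf (add_nonneg hp hq) hr)
    calc (p + q) ⊓ r = r ⊓ (p + q) := inf_comm _ _
    _ ≤ r ⊓ p + r ⊓ q := aux_riesz _ _ _ hr hp hq
    _ = p ⊓ r + q ⊓ r := by rw [inf_comm r p, inf_comm r q]
    _ = 0 := by rw [h1, h3, add_zero]
  have e2 : (p + q) ⊓ s = 0 := by
    refine le_antisymm ?_ (le_inf (add_nonneg hp hq) hs)
    calc (p + q) ⊓ s = s ⊓ (p + q) := inf_comm _ _
    _ ≤ s ⊓ p + s ⊓ q := aux_riesz _ _ _ hs hp hq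
    _ = p ⊓ s + q ⊓ s := by rw [inf_comm s p, inf_comm s q]
    _ = 0 := by rw [h2, h4, add_zero]
  calc (p + q) ⊓ (r + s) ≤ (p + q) ⊓ r + (p + q) ⊓ s := step1
  _ = 0 := by rw [e1, e2, add_zero]

lemma aux_posPart_eq {b c : E} (hb : 0 ≤ b) (hc : 0 ≤ c) (hbc : b ⊓ c = 0) :
    (b - c)⁺ = b ∧ (b - c)⁻ = c := by
  have hsup : b ⊔ c = b + c := by rw [← inf_add_sup, hbc, zero_add]
  have h1 : (b - c)⁺ = b := by
    rw [posPart_def]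
    have h := sup_sub b c c
    rw [sub_self] at h
    rw [← h, hsup, add_sub_cancel_right]
  refine ⟨h1, ?_⟩
  have h2 : (b - c)⁺ - (b - c)⁻ = b - c := posPart_sub_negPart (b - c)
  rw [h1] at h2
  exact sub_right_inj.mp h2

lemma aux_abs_add_of_disj {a b : E} (h : |a| ⊓ |b| = 0) :
    (a + b)⁺ = a⁺ + b⁺ ∧ (a + b)⁻ = a⁻ + b⁻ ∧ |a + b| = |a| + |b| := by
  have hpp : a⁺ ⊓ b⁺ = 0 := aux_inf0 (posPart_nonneg a) (posPart_nonneg b)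
    (aux_posPart_le_abs a) (aux_posPart_le_abs b) h
  have hpn : a⁺ ⊓ b⁻ = 0 := aux_inf0 (posPart_nonneg a) (negPart_nonneg b)
    (aux_posPart_le_abs a) (aux_negPart_le_abs b) h
  have hnp : b⁺ ⊓ a⁻ = 0 := aux_inf0 (posPart_nonneg b) (negPart_nonneg a)
    (aux_posPart_le_abs b) (aux_negPart_le_abs a) (by rw [inf_comm]; exact h)
  have hnn : a⁻ ⊓ b⁻ = 0 := aux_inf0 (negPart_nonneg a) (negPart_nonneg b)
    (aux_negPart_le_abs a) (aux_negPart_le_abs b) h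
  have hd : (a⁺ + b⁺) ⊓ (a⁻ + b⁻) = 0 :=
    aux_add_disj (posPart_nonneg a) (posPart_nonneg b) (negPart_nonneg a) (negPart_nonneg b)
      (posPart_inf_negPart_eq_zero a) hpn hnp (posPart_inf_negPart_eq_zero b)
  have heq : (a⁺ + b⁺) - (a⁻ + b⁻) = a + b := by
    have h1 : (a⁺ + b⁺) - (a⁻ + b⁻) = (a⁺ - a⁻) + (b⁺ - b⁻) := by abel
    rw [h1, posPart_sub_negPart, posPart_sub_negPart]
  obtain ⟨e1, e2⟩ := aux_posPart_eq (add_nonneg (posPart_nonneg a) (posPart_nonneg b))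
    (add_nonneg (negPart_nonneg a) (negPart_nonneg b)) hd
  rw [heq] at e1 e2
  refine ⟨e1, e2, ?_⟩
  rw [← posPart_add_negPart (a + b), e1, e2, ← posPart_add_negPart a, ← posPart_add_negPart b]
  abel

lemma aux_frag_abs_le {z x : E} (h : Fragment z x) : |z| ≤ |x| ∧ |x - z| ≤ |x| := by
  have h3 := (aux_abs_add_of_disj h).2.2
  have h4 : z + (x - z) = x := by abel
  rw [h4] at h3
  exact ⟨h3 ▸ le_add_of_nonneg_right (abs_nonneg _), h3 ▸ le_add_of_nonneg_left (abs_nonneg _)⟩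

lemma aux_posPart_sub_le (u v : E) : u⁺ - v⁺ ≤ (u - v)⁺ := by
  rw [sub_le_iff_le_add]
  rw [posPart_def u]
  refine sup_le ?_ ?_
  · calc u = (u - v) + v := by abel
    _ ≤ (u - v)⁺ + v⁺ := add_le_add (le_posPart _) (le_posPart _)
  · exact add_nonneg (posPart_nonneg _) (posPart_nonneg _)

lemma aux_frag_posPart {z x : E} (h : Fragment z x) : Fragment z⁺ x⁺ := by
  have h1 : |z⁺| ≤ |z| := by
    rw [abs_of_nonneg (posPart_nonneg z)]; exact aux_posPart_le_abs z
  have h2 : |x⁺ - z⁺| ≤ |x - z| := by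
    have e : |x⁺ - z⁺| = (x⁺ - z⁺) ⊔ -(x⁺ - z⁺) := rfl
    rw [e, neg_sub]
    refine sup_le ((aux_posPart_sub_le x z).trans (aux_posPart_le_abs _)) ?_
    calc z⁺ - x⁺ ≤ (z - x)⁺ := aux_posPart_sub_le z x
    _ ≤ |z - x| := aux_posPart_le_abs _
    _ = |x - z| := abs_sub_comm z x
  exact aux_inf0 (abs_nonneg _) (abs_nonneg _) h1 h2 h

lemma aux_frag_neg {z x : E} (h : Fragment z x) : Fragment (-z) (-x) := by
  unfold Fragment at h ⊢
  have e : -x - -z = -(x - z) := by abel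
  rw [abs_neg, e, abs_neg]
  exact h

lemma aux_frag_negPart {z x : E} (h : Fragment z x) : Fragment z⁻ x⁻ := by
  rw [← posPart_neg z, ← posPart_neg x]
  exact aux_frag_posPart (aux_frag_neg h)

lemma aux_frag_decomp_pos {a b z : E} (ha : 0 ≤ a) (hb : 0 ≤ b) (hab : a ⊓ b = 0)
    (hz : 0 ≤ z) (h : Fragment z (a + b)) :
    Fragment (z ⊓ a) a ∧ Fragment (z ⊓ b) b ∧ z ⊓ a + z ⊓ b = z := by
  have hzle : z ≤ a + b := by
    have h1 := (aux_frag_abs_le h).1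
    rwa [abs_of_nonneg hz, abs_of_nonneg (add_nonneg ha hb)] at h1
  have hfrag0 : z ⊓ (a + b - z) = 0 := by
    have h2 : |z| ⊓ |a + b - z| = 0 := h
    rwa [abs_of_nonneg hz, abs_of_nonneg (sub_nonneg.mpr hzle)] at h2
  have hza : 0 ≤ z ⊓ a := le_inf hz ha
  have hzb : 0 ≤ z ⊓ b := le_inf hz hb
  have hsum : z ⊓ a + z ⊓ b = z := by
    refine le_antisymm ?_ ?_
    · have hdisj : (z ⊓ a) ⊓ (z ⊓ b) = 0 :=
        aux_inf0 hza hzb inf_le_right inf_le_right hab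
      have : (z ⊓ a) ⊓ (z ⊓ b) + (z ⊓ a) ⊔ (z ⊓ b) = z ⊓ a + z ⊓ b := inf_add_sup _ _
      rw [hdisj, zero_add] at this
      rw [← this]
      exact sup_le inf_le_left inf_le_left
    · have : z ⊓ (a + b) = z := inf_eq_left.mpr hzle
      calc z = z ⊓ (a + b) := this.symm
      _ ≤ z ⊓ a + z ⊓ b := aux_riesz z a b hz ha hb
  refine ⟨?_, ?_, hsum⟩
  · show |z ⊓ a| ⊓ |a - z ⊓ a| = 0
    rw [abs_of_nonneg hza, abs_of_nonneg (sub_nonneg.mpr inf_le_right)]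
    refine aux_inf0 hza (sub_nonneg.mpr inf_le_right) inf_le_left ?_ hfrag0
    calc a - z ⊓ a ≤ (a - z ⊓ a) + (b - z ⊓ b) :=
      le_add_of_nonneg_right (sub_nonneg.mpr inf_le_right)
    _ = a + b - z := by rw [sub_add_sub_comm, hsum]
  · show |z ⊓ b| ⊓ |b - z ⊓ b| = 0
    rw [abs_of_nonneg hzb, abs_of_nonneg (sub_nonneg.mpr inf_le_right)]
    refine aux_inf0 hzb (sub_nonneg.mpr inf_le_right) inf_le_left ?_ hfrag0
    calc b - z ⊓ b ≤ (a - z ⊓ a) + (b - z ⊓ b) :=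
      le_add_of_nonneg_left (sub_nonneg.mpr inf_le_right)
    _ = a + b - z := by rw [sub_add_sub_comm, hsum]

lemma aux_abs_sub_of_disj {p q : E} (hp : 0 ≤ p) (hq : 0 ≤ q) (hpq : p ⊓ q = 0) :
    |p - q| = p + q := by
  have h : |p| ⊓ |(-q)| = 0 := by
    rwa [abs_of_nonneg hp, abs_neg, abs_of_nonneg hq]
  have h2 := (aux_abs_add_of_disj h).2.2
  rw [← sub_eq_add_neg] at h2
  rw [h2, abs_of_nonneg hp, abs_neg, abs_of_nonneg hq]

lemma aux_frag_decomp {x y z : E} (hxy : |x| ⊓ |y| = 0) (h : Fragment z (x + y)) :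
    ∃ u v : E, Fragment u x ∧ Fragment v y ∧ |u| ⊓ |v| = 0 ∧ z = u + v := by
  have hxpyp : x⁺ ⊓ y⁺ = 0 := aux_inf0 (posPart_nonneg x) (posPart_nonneg y)
    (aux_posPart_le_abs x) (aux_posPart_le_abs y) hxy
  have hxnyn : x⁻ ⊓ y⁻ = 0 := aux_inf0 (negPart_nonneg x) (negPart_nonneg y)
    (aux_negPart_le_abs x) (aux_negPart_le_abs y) hxy
  obtain ⟨ep, en, _⟩ := aux_abs_add_of_disj hxy
  -- positive parts
  have hzp : Fragment z⁺ (x⁺ + y⁺) := ep ▸ aux_frag_posPart h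
  have hzn : Fragment z⁻ (x⁻ + y⁻) := en ▸ aux_frag_negPart h
  obtain ⟨hu1, hv1, hs1⟩ := aux_frag_decomp_pos (posPart_nonneg x) (posPart_nonneg y)
    hxpyp (posPart_nonneg z) hzp
  obtain ⟨hu2, hv2, hs2⟩ := aux_frag_decomp_pos (negPart_nonneg x) (negPart_nonneg y)
    hxnyn (negPart_nonneg z) hzn
  set u₁ := z⁺ ⊓ x⁺ with hu₁def
  set v₁ := z⁺ ⊓ y⁺ with hv₁def
  set u₂ := z⁻ ⊓ x⁻ with hu₂def
  set v₂ := z⁻ ⊓ y⁻ with hv₂def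
  have hu₁0 : 0 ≤ u₁ := le_inf (posPart_nonneg z) (posPart_nonneg x)
  have hv₁0 : 0 ≤ v₁ := le_inf (posPart_nonneg z) (posPart_nonneg y)
  have hu₂0 : 0 ≤ u₂ := le_inf (negPart_nonneg z) (negPart_nonneg x)
  have hv₂0 : 0 ≤ v₂ := le_inf (negPart_nonneg z) (negPart_nonneg y)
  have hu₁x : u₁ ≤ x⁺ := inf_le_right
  have hv₁y : v₁ ≤ y⁺ := inf_le_right
  have hu₂x : u₂ ≤ x⁻ := inf_le_right
  have hv₂y : v₂ ≤ y⁻ := inf_le_right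
  refine ⟨u₁ - u₂, v₁ - v₂, ?_, ?_, ?_, ?_⟩
  · -- Fragment (u₁ - u₂) x
    show |u₁ - u₂| ⊓ |x - (u₁ - u₂)| = 0
    have hd : u₁ ⊓ u₂ = 0 :=
      aux_inf0 hu₁0 hu₂0 hu₁x hu₂x (posPart_inf_negPart_eq_zero x)
    have e1 : |u₁ - u₂| = u₁ + u₂ := aux_abs_sub_of_disj hu₁0 hu₂0 hd
    have e2 : x - (u₁ - u₂) = (x⁺ - u₁) - (x⁻ - u₂) := by
      conv_lhs => rw [← posPart_sub_negPart x]
      abel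
    have hd2 : (x⁺ - u₁) ⊓ (x⁻ - u₂) = 0 :=
      aux_inf0 (sub_nonneg.mpr hu₁x) (sub_nonneg.mpr hu₂x)
        (sub_le_self _ hu₁0) (sub_le_self _ hu₂0) (posPart_inf_negPart_eq_zero x)
    have e3 : |x - (u₁ - u₂)| = (x⁺ - u₁) + (x⁻ - u₂) := by
      rw [e2]; exact aux_abs_sub_of_disj (sub_nonneg.mpr hu₁x) (sub_nonneg.mpr hu₂x) hd2
    rw [e1, e3]
    have f1 : u₁ ⊓ (x⁺ - u₁) = 0 := by
      have := hu1; unfold Fragment at this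
      rwa [abs_of_nonneg hu₁0, abs_of_nonneg (sub_nonneg.mpr hu₁x)] at this
    have f4 : u₂ ⊓ (x⁻ - u₂) = 0 := by
      have := hu2; unfold Fragment at this
      rwa [abs_of_nonneg hu₂0, abs_of_nonneg (sub_nonneg.mpr hu₂x)] at this
    have f2 : u₁ ⊓ (x⁻ - u₂) = 0 :=
      aux_inf0 hu₁0 (sub_nonneg.mpr hu₂x) hu₁x (sub_le_self _ hu₂0)
        (posPart_inf_negPart_eq_zero x)
    have f3 : u₂ ⊓ (x⁺ - u₁) = 0 := by
      refine aux_inf0 hu₂0 (sub_nonneg.mpr hu₁x) hu₂x (sub_le_self _ hu₁0) ?_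
      rw [inf_comm]; exact posPart_inf_negPart_eq_zero x
    exact aux_add_disj hu₁0 hu₂0 (sub_nonneg.mpr hu₁x) (sub_nonneg.mpr hu₂x) f1 f2 f3 f4
  · -- Fragment (v₁ - v₂) y
    show |v₁ - v₂| ⊓ |y - (v₁ - v₂)| = 0
    have hd : v₁ ⊓ v₂ = 0 :=
      aux_inf0 hv₁0 hv₂0 hv₁y hv₂y (posPart_inf_negPart_eq_zero y)
    have e1 : |v₁ - v₂| = v₁ + v₂ := aux_abs_sub_of_disj hv₁0 hv₂0 hd
    have e2 : y - (v₁ - v₂) = (y⁺ - v₁) - (y⁻ - v₂) := by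
      conv_lhs => rw [← posPart_sub_negPart y]
      abel
    have hd2 : (y⁺ - v₁) ⊓ (y⁻ - v₂) = 0 :=
      aux_inf0 (sub_nonneg.mpr hv₁y) (sub_nonneg.mpr hv₂y)
        (sub_le_self _ hv₁0) (sub_le_self _ hv₂0) (posPart_inf_negPart_eq_zero y)
    have e3 : |y - (v₁ - v₂)| = (y⁺ - v₁) + (y⁻ - v₂) := by
      rw [e2]; exact aux_abs_sub_of_disj (sub_nonneg.mpr hv₁y) (sub_nonneg.mpr hv₂y) hd2
    rw [e1, e3]
    have f1 : v₁ ⊓ (y⁺ - v₁) = 0 := by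
      have := hv1; unfold Fragment at this
      rwa [abs_of_nonneg hv₁0, abs_of_nonneg (sub_nonneg.mpr hv₁y)] at this
    have f4 : v₂ ⊓ (y⁻ - v₂) = 0 := by
      have := hv2; unfold Fragment at this
      rwa [abs_of_nonneg hv₂0, abs_of_nonneg (sub_nonneg.mpr hv₂y)] at this
    have f2 : v₁ ⊓ (y⁻ - v₂) = 0 :=
      aux_inf0 hv₁0 (sub_nonneg.mpr hv₂y) hv₁y (sub_le_self _ hv₂0)
        (posPart_inf_negPart_eq_zero y)
    have f3 : v₂ ⊓ (y⁺ - v₁) = 0 := by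
      refine aux_inf0 hv₂0 (sub_nonneg.mpr hv₁y) hv₂y (sub_le_self _ hv₁0) ?_
      rw [inf_comm]; exact posPart_inf_negPart_eq_zero y
    exact aux_add_disj hv₁0 hv₂0 (sub_nonneg.mpr hv₁y) (sub_nonneg.mpr hv₂y) f1 f2 f3 f4
  · -- disjointness of the two pieces
    have hdu : u₁ ⊓ u₂ = 0 :=
      aux_inf0 hu₁0 hu₂0 hu₁x hu₂x (posPart_inf_negPart_eq_zero x)
    have hdv : v₁ ⊓ v₂ = 0 :=
      aux_inf0 hv₁0 hv₂0 hv₁y hv₂y (posPart_inf_negPart_eq_zero y)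
    rw [aux_abs_sub_of_disj hu₁0 hu₂0 hdu, aux_abs_sub_of_disj hv₁0 hv₂0 hdv]
    have g1 : u₁ ⊓ v₁ = 0 := aux_inf0 hu₁0 hv₁0 hu₁x hv₁y hxpyp
    have g2 : u₁ ⊓ v₂ = 0 := aux_inf0 hu₁0 hv₂0 (hu₁x.trans (aux_posPart_le_abs x))
      (hv₂y.trans (aux_negPart_le_abs y)) hxy
    have g3 : u₂ ⊓ v₁ = 0 := aux_inf0 hu₂0 hv₁0 (hu₂x.trans (aux_negPart_le_abs x))
      (hv₁y.trans (aux_posPart_le_abs y)) hxy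
    have g4 : u₂ ⊓ v₂ = 0 := aux_inf0 hu₂0 hv₂0 hu₂x hv₂y hxnyn
    exact aux_add_disj hu₁0 hu₂0 hv₁0 hv₂0 g1 g2 g3 g4
  · -- z = (u₁ - u₂) + (v₁ - v₂)
    have : z = z⁺ - z⁻ := (posPart_sub_negPart z).symm
    rw [this, ← hs1, ← hs2]; abel

lemma aux_frag_add {x y u v : E} (hxy : |x| ⊓ |y| = 0)
    (hu : Fragment u x) (hv : Fragment v y) :
    Fragment (u + v) (x + y) ∧ |u| ⊓ |v| = 0 := by
  obtain ⟨hu1, hu2⟩ := aux_frag_abs_le hu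
  obtain ⟨hv1, hv2⟩ := aux_frag_abs_le hv
  have huv : |u| ⊓ |v| = 0 := aux_inf0 (abs_nonneg _) (abs_nonneg _) hu1 hv1 hxy
  refine ⟨?_, huv⟩
  show |u + v| ⊓ |x + y - (u + v)| = 0
  have e : x + y - (u + v) = (x - u) + (y - v) := by abel
  refine le_antisymm ?_ (le_inf (abs_nonneg _) (abs_nonneg _))
  calc |u + v| ⊓ |x + y - (u + v)| ≤ (|u| + |v|) ⊓ (|x - u| + |y - v|) := by
        refine inf_le_inf (abs_add_le u v) ?_
        rw [e]; exact abs_add_le _ _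
  _ = 0 := by
    refine aux_add_disj (abs_nonneg _) (abs_nonneg _) (abs_nonneg _) (abs_nonneg _)
      hu ?_ ?_ hv
    · exact aux_inf0 (abs_nonneg _) (abs_nonneg _) hu1 hv2 hxy
    · refine aux_inf0 (abs_nonneg _) (abs_nonneg _) hv1 hu2 ?_
      rw [inf_comm]; exact hxy

end LatGrp

section CCL
variable {F : Type*} [ConditionallyCompleteLattice F] [AddCommGroup F]
  [CovariantClass F F (· + ·) (· ≤ ·)]

lemma aux_csSup_add {A B : Set F} (hA : A.Nonempty) (hB : B.Nonempty)
    (hbA : BddAbove A) (hbB : BddAbove B) :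
    sSup {s | ∃ a ∈ A, ∃ b ∈ B, s = a + b} = sSup A + sSup B := by
  set S := {s | ∃ a ∈ A, ∃ b ∈ B, s = a + b} with hSdef
  have hS : S.Nonempty := by
    obtain ⟨a, ha⟩ := hA; obtain ⟨b, hb⟩ := hB
    exact ⟨a + b, a, ha, b, hb, rfl⟩
  have hbS : BddAbove S := by
    refine ⟨sSup A + sSup B, ?_⟩
    rintro s ⟨a, ha, b, hb, rfl⟩
    exact add_le_add (le_csSup hbA ha) (le_csSup hbB hb)
  refine le_antisymm ?_ ?_
  · refine csSup_le hS ?_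
    rintro s ⟨a, ha, b, hb, rfl⟩
    exact add_le_add (le_csSup hbA ha) (le_csSup hbB hb)
  · have key : ∀ b ∈ B, sSup A + b ≤ sSup S := by
      intro b hb
      rw [← le_sub_iff_add_le]
      refine csSup_le hA fun a ha => ?_
      rw [le_sub_iff_add_le]
      exact le_csSup hbS ⟨a, ha, b, hb, rfl⟩
    have h2 : sSup B ≤ sSup S - sSup A := by
      refine csSup_le hB fun b hb => ?_
      rw [le_sub_iff_add_le, add_comm]
      exact key b hb
    calc sSup A + sSup B ≤ sSup A + (sSup S - sSup A) :=
      add_le_add (le_refl _) h2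
    _ = sSup S := by abel

end CCL

/-- For `F` Dedekind complete and an abstract Uryson operator `T : E → F`, the positive
part `T⁺` of `T` in `U(E,F)` (the supremum of `T` and `0`) satisfies
`T⁺ f = sup { T g : g ⊑ f }`, the supremum over the fragments of `f`. -/
theorem stmt4 {E F : Type*} [Lattice E] [AddCommGroup E]
    [CovariantClass E E (· + ·) (· ≤ ·)] [Module ℝ E]
    [ConditionallyCompleteLattice F] [AddCommGroup F]
    [CovariantClass F F (· + ·) (· ≤ ·)] [Module ℝ F]
    (T : E → F) (hT : Uryson T) :
    ∃ P : E → F, Uryson P ∧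
      (∀ x, T x ≤ P x) ∧ (∀ x, 0 ≤ P x) ∧
      (∀ U : E → F, Uryson U → (∀ x, T x ≤ U x) → (∀ x, 0 ≤ U x) → ∀ x, P x ≤ U x) ∧
      ∀ f : E, P f = sSup {v : F | ∃ g : E, Fragment g f ∧ v = T g} := by
  set SF : E → Set F := fun f => {v : F | ∃ g : E, Fragment g f ∧ v = T g} with hSF
  -- Basic fragment facts
  have hfrag_self : ∀ f : E, Fragment f f := by
    intro f
    show |f| ⊓ |f - f| = 0
    rw [sub_self, abs_zero]
    exact inf_eq_right.mpr (abs_nonneg f)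
  have hfrag_zero : ∀ f : E, Fragment 0 f := by
    intro f
    show |(0 : E)| ⊓ |f - 0| = 0
    rw [abs_zero, sub_zero]
    exact inf_eq_left.mpr (abs_nonneg f)
  have hT0 : T 0 = 0 := by
    have h := hT.1 0 0 (by rw [abs_zero, inf_idem])
    rw [add_zero] at h
    exact left_eq_add.mp h
  have hne : ∀ f : E, (SF f).Nonempty := fun f => ⟨T f, f, hfrag_self f, rfl⟩
  -- membership of fragments in order intervals
  have hmem : ∀ (f M : E), |f| ≤ M → ∀ g : E, Fragment g f → g ∈ Set.Icc (-M) M := by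
    intro f M hM g hg
    have h1 : |g| ≤ M := (aux_frag_abs_le hg).1.trans hM
    refine ⟨?_, (le_abs_self g).trans h1⟩
    have h2 : -g ≤ M := (neg_le_abs g).trans h1
    exact neg_le.mp h2
  have hbdd : ∀ f : E, BddAbove (SF f) := by
    intro f
    obtain ⟨c, d, hcd⟩ := hT.2 (-|f|) |f|
    refine ⟨d, ?_⟩
    rintro v ⟨g, hg, rfl⟩
    exact (hcd g (hmem f |f| le_rfl g hg)).2
  refine ⟨fun f => sSup (SF f), ⟨?_, ?_⟩, ?_, ?_, ?_, fun f => rfl⟩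
  · -- orthogonal additivity
    intro x y hxy
    have hset : SF (x + y) = {s | ∃ a ∈ SF x, ∃ b ∈ SF y, s = a + b} := by
      ext s
      constructor
      · rintro ⟨z, hz, rfl⟩
        obtain ⟨u, v, hu, hv, huv, rfl⟩ := aux_frag_decomp hxy hz
        exact ⟨T u, ⟨u, hu, rfl⟩, T v, ⟨v, hv, rfl⟩, hT.1 u v huv⟩
      · rintro ⟨a, ⟨u, hu, rfl⟩, b, ⟨v, hv, rfl⟩, rfl⟩
        obtain ⟨hfr, huv⟩ := aux_frag_add hxy hu hv
        exact ⟨u + v, hfr, (hT.1 u v huv).symm⟩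
    show sSup (SF (x + y)) = sSup (SF x) + sSup (SF y)
    rw [hset]
    exact aux_csSup_add (hne x) (hne y) (hbdd x) (hbdd y)
  · -- order boundedness
    intro a b
    obtain ⟨c, d, hcd⟩ := hT.2 (-(|a| + |b|)) (|a| + |b|)
    refine ⟨c, d, ?_⟩
    intro x hx
    obtain ⟨hx1, hx2⟩ := hx
    have hxM : |x| ≤ |a| + |b| := by
      refine abs_le'.mpr ⟨?_, ?_⟩
      · have p1 : x ≤ |b| := hx2.trans (le_abs_self b)
        have p2 : |b| ≤ |a| + |b| := le_add_of_nonneg_left (abs_nonneg a)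
        exact p1.trans p2
      · have p1 : -x ≤ -a := neg_le_neg_iff.mpr hx1
        have p2 : -a ≤ |a| := neg_le_abs a
        have p3 : |a| ≤ |a| + |b| := le_add_of_nonneg_right (abs_nonneg b)
        exact (p1.trans p2).trans p3
    have hTg : ∀ g : E, Fragment g x → T g ∈ Set.Icc c d := fun g hg =>
      hcd g (hmem x (|a| + |b|) hxM g hg)
    constructor
    · exact (hTg x (hfrag_self x)).1.trans (le_csSup (hbdd x) ⟨x, hfrag_self x, rfl⟩)
    · refine csSup_le (hne x) ?_
      rintro v ⟨g, hg, rfl⟩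
      exact (hTg g hg).2
  · -- T ≤ P
    intro x
    exact le_csSup (hbdd x) ⟨x, hfrag_self x, rfl⟩
  · -- 0 ≤ P
    intro x
    exact le_csSup (hbdd x) ⟨0, hfrag_zero x, hT0.symm⟩
  · -- minimality
    intro U hU hTU hU0 x
    refine csSup_le (hne x) ?_
    rintro v ⟨g, hg, rfl⟩
    have h1 : U x = U g + U (x - g) := by
      have h2 := hU.1 g (x - g) hg
      rw [show g + (x - g) = x by abel] at h2
      exact h2
    calc T g ≤ U g := hTU g
    _ ≤ U g + U (x - g) := le_add_of_nonneg_right (hU0 (x - g))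
    _ = U x := h1.symm
end

section
/- Let E, F be vector lattices with F Dedekind complete. Two positive abstract Uryson operators T, S : E → F are disjoint in U(E,F) if and only if for every e ∈ E and every ε > 0 there exist a family (ρ_α) of pairwise disjoint band projections on F with sup ρ_α = Id (a partition of unity) and a family (e_α) of fragments of e such that ρ_α T e_α ≤ ε Te and ρ_α S(e − e_α) ≤ ε Se for all α. -/
/-- A band (order) projection on a Dedekind complete vector lattice `F`:
additive, idempotent, and `0 ≤ ρ x ≤ x` for all `x ≥ 0`. -/
def IsBandProj {F : Type*} [Lattice F] [AddCommGroup F] (ρ : F → F) : Prop :=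
  (∀ x y : F, ρ (x + y) = ρ x + ρ y) ∧ (∀ x, ρ (ρ x) = ρ x) ∧
    ∀ x : F, 0 ≤ x → 0 ≤ ρ x ∧ ρ x ≤ x

/-- Disjointness of two positive abstract Uryson operators `T, S` in `U(E,F)`:
`T ⊓ S = 0`, i.e. every abstract Uryson operator `R` with `R ≤ T` and `R ≤ S`
(pointwise, which is the order of `U(E,F)`) satisfies `R ≤ 0`. -/
def UDisjointPos {E F : Type*} [Lattice E] [AddCommGroup E] [Lattice F] [AddCommGroup F]
    (T S : E → F) : Prop :=
  ∀ R : E → F, Uryson R → (∀ x, R x ≤ T x) → (∀ x, R x ≤ S x) → ∀ x, R x ≤ 0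

section LGroup
variable {α : Type*} [Lattice α] [AddCommGroup α] [CovariantClass α α (· + ·) (· ≤ ·)]

theorem my_inf_add_le {a b c : α} (ha : 0 ≤ a) (hb : 0 ≤ b) (hc : 0 ≤ c) :
    a ⊓ (b + c) ≤ a ⊓ b + a ⊓ c := by
  have h1 : a ⊓ (b + c) ≤ a ⊓ b + c := by
    calc a ⊓ (b + c) ≤ (c + a) ⊓ (c + b) :=
          le_inf (inf_le_left.trans (le_add_of_nonneg_left hc))
            (inf_le_right.trans (add_comm b c).le)
      _ = c + a ⊓ b := (add_inf a b c).symm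
      _ = a ⊓ b + c := add_comm _ _
  have h2 : a ⊓ (b + c) - a ⊓ b ≤ (a - a ⊓ b) ⊓ c :=
    le_inf (sub_le_sub_right inf_le_left _) (sub_le_iff_le_add.2 (h1.trans (add_comm _ _).le))
  have h3 : (a - a ⊓ b) ⊓ c ≤ a ⊓ c := inf_le_inf_right _ (sub_le_self _ (le_inf ha hb))
  have h4 := sub_le_iff_le_add.1 (h2.trans h3)
  calc a ⊓ (b + c) ≤ a ⊓ c + a ⊓ b := h4
    _ = a ⊓ b + a ⊓ c := add_comm _ _

theorem my_disjoint_nsmul {a b : α} (ha : 0 ≤ a) (hb : 0 ≤ b) (h : a ⊓ b = 0) (n : ℕ) :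
    a ⊓ (n • b) = 0 := by
  induction n with
  | zero => simpa using inf_eq_right.2 ha
  | succ k ih =>
    have h0 : (0:α) ≤ a ⊓ ((k • b) + b) := le_inf ha (add_nonneg (nsmul_nonneg hb k) hb)
    rw [succ_nsmul]
    refine le_antisymm ?_ h0
    calc a ⊓ (k • b + b) ≤ a ⊓ (k • b) + a ⊓ b := my_inf_add_le ha (nsmul_nonneg hb k) hb
      _ = 0 := by rw [ih, h, add_zero]

theorem my_disjoint_nsmul' {a b : α} (ha : 0 ≤ a) (hb : 0 ≤ b) (h : a ⊓ b = 0) (n m : ℕ) :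
    (n • a) ⊓ (m • b) = 0 := by
  have h1 : a ⊓ (m • b) = 0 := my_disjoint_nsmul ha hb h m
  rw [inf_comm]
  exact my_disjoint_nsmul (nsmul_nonneg hb m) ha (by rw [inf_comm]; exact h1) n

theorem my_nsmul_inf (a b : α) (n : ℕ) : (n • a) ⊓ (n • b) = n • (a ⊓ b) := by
  have key : (a - a ⊓ b) ⊓ (b - a ⊓ b) = 0 := by
    have h := add_inf (a - a ⊓ b) (b - a ⊓ b) (a ⊓ b)
    simp only [add_sub_cancel] at h
    exact add_eq_left.1 h
  have h2 : (n • (a - a ⊓ b)) ⊓ (n • (b - a ⊓ b)) = 0 :=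
    my_disjoint_nsmul' (by simp) (by simp) key n n
  rw [smul_sub, smul_sub] at h2
  have h := add_inf (n • a - n • (a ⊓ b)) (n • b - n • (a ⊓ b)) (n • (a ⊓ b))
  simp only [add_sub_cancel] at h
  rw [h2, add_zero] at h
  exact h.symm

theorem my_disjoint_add_inf {a b c d : α} (ha : 0 ≤ a) (hb : 0 ≤ b) (hc : 0 ≤ c) (hd : 0 ≤ d)
    (hac : a ⊓ c = 0) (had : a ⊓ d = 0) (hbc : b ⊓ c = 0) (hbd : b ⊓ d = 0) :
    (a + b) ⊓ (c + d) = 0 := by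
  have hab : (0:α) ≤ a + b := add_nonneg ha hb
  have h0 : (0:α) ≤ (a + b) ⊓ (c + d) := le_inf hab (add_nonneg hc hd)
  refine le_antisymm ?_ h0
  calc (a + b) ⊓ (c + d) ≤ (a + b) ⊓ c + (a + b) ⊓ d := my_inf_add_le hab hc hd
    _ ≤ (c ⊓ a + c ⊓ b) + (d ⊓ a + d ⊓ b) := by
        refine add_le_add ?_ ?_
        · rw [inf_comm]; exact my_inf_add_le hc ha hb
        · rw [inf_comm]; exact my_inf_add_le hd ha hb
    _ = 0 := by rw [inf_comm c a, inf_comm c b, inf_comm d a, inf_comm d b,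
        hac, hbc, had, hbd]; simp

theorem my_sum_eq_sup {a b : α} (h : a ⊓ b = 0) : a + b = a ⊔ b := by
  have := inf_add_sup a b
  rw [h, zero_add] at this; exact this.symm

theorem my_add_le_of_disjoint {a b c : α} (h : a ⊓ b = 0)
    (hac : a ≤ c) (hbc : b ≤ c) : a + b ≤ c := by
  rw [my_sum_eq_sup h]; exact sup_le hac hbc

theorem my_decomp {a b c : α} (ha : 0 ≤ a) (hb : 0 ≤ b) (hc : 0 ≤ c)
    (habc : a ≤ b + c) (hbc : b ⊓ c = 0) : a = a ⊓ b + a ⊓ c := by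
  have h1 : a ≤ a ⊓ b + a ⊓ c := by
    have h' := my_inf_add_le ha hb hc
    rwa [inf_eq_left.2 habc] at h'
  have hd : (a ⊓ b) ⊓ (a ⊓ c) = 0 :=
    le_antisymm ((inf_le_inf inf_le_right inf_le_right).trans hbc.le)
      (le_inf (le_inf ha hb) (le_inf ha hc))
  exact le_antisymm h1 (my_add_le_of_disjoint hd inf_le_left inf_le_left)

theorem my_eq_posPart {p q a : α} (hpq : p ⊓ q = 0) (ha : a = p - q) : a⁺ = p ∧ a⁻ = q := by
  have h1 : a⁺ = p := by
    rw [posPart_def, ha]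
    calc (p - q) ⊔ 0 = (p - q) ⊔ (q - q) := by rw [sub_self]
      _ = (-q + p) ⊔ (-q + q) := by rw [sub_eq_add_neg, sub_eq_add_neg, add_comm p, add_comm q]
      _ = -q + (p ⊔ q) := (add_sup p q (-q)).symm
      _ = (p ⊔ q) - q := by rw [add_comm, ← sub_eq_add_neg]
      _ = (p + q - p ⊓ q) - q := by rw [← inf_add_sup p q]; abel
      _ = p := by rw [hpq]; abel
  refine ⟨h1, ?_⟩
  have h2 := posPart_sub_negPart a
  rw [h1] at h2
  have h4 : p - a⁻ = p - q := by rw [h2]; exact ha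
  exact sub_right_inj.1 h4

theorem my_abs_of_disjoint {p q a : α} (hpq : p ⊓ q = 0) (ha : a = p - q) : |a| = p + q := by
  obtain ⟨h1, h2⟩ := my_eq_posPart hpq ha
  rw [← posPart_add_negPart a, h1, h2]
end LGroup

section Frag
variable {α : Type*} [Lattice α] [AddCommGroup α] [CovariantClass α α (· + ·) (· ≤ ·)]

theorem my_posPart_le_abs (a : α) : a⁺ ≤ |a| := by
  rw [← posPart_add_negPart]; exact le_add_of_nonneg_right (negPart_nonneg _)

theorem my_negPart_le_abs (a : α) : a⁻ ≤ |a| := by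
  rw [← posPart_add_negPart]; exact le_add_of_nonneg_left (posPart_nonneg _)

theorem my_disjoint_mono {a b a' b' : α} (ha' : 0 ≤ a') (hb' : 0 ≤ b')
    (haa : a' ≤ a) (hbb : b' ≤ b) (hab : a ⊓ b = 0) : a' ⊓ b' = 0 :=
  le_antisymm ((inf_le_inf haa hbb).trans hab.le) (le_inf ha' hb')

/-- structure of a disjoint decomposition `x = z + u`, `|z| ⊓ |u| = 0`. -/
theorem my_frag_struct {x z : α} (hz : |z| ⊓ |x - z| = 0) :
    x⁺ = z⁺ + (x - z)⁺ ∧ x⁻ = z⁻ + (x - z)⁻ ∧ |x| = |z| + |x - z| := by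
  set u := x - z with hu
  have h1 : z⁺ ⊓ u⁻ = 0 := my_disjoint_mono (posPart_nonneg _) (negPart_nonneg _)
    (my_posPart_le_abs z) (my_negPart_le_abs u) hz
  have h2 : u⁺ ⊓ z⁻ = 0 := my_disjoint_mono (posPart_nonneg _) (negPart_nonneg _)
    (my_posPart_le_abs u) (my_negPart_le_abs z) (by rw [inf_comm]; exact hz)
  have hd : (z⁺ + u⁺) ⊓ (z⁻ + u⁻) = 0 :=
    my_disjoint_add_inf (posPart_nonneg _) (posPart_nonneg _) (negPart_nonneg _)
      (negPart_nonneg _) (posPart_inf_negPart_eq_zero z) h1 h2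
      (posPart_inf_negPart_eq_zero u)
  have hx : x = (z⁺ + u⁺) - (z⁻ + u⁻) := by
    have hz' := posPart_sub_negPart z
    have hu' := posPart_sub_negPart u
    have h3 : (z⁺ + u⁺) - (z⁻ + u⁻) = (z⁺ - z⁻) + (u⁺ - u⁻) := by abel
    rw [h3, hz', hu', hu]; abel
  obtain ⟨hp, hn⟩ := my_eq_posPart hd hx
  refine ⟨hp, hn, ?_⟩
  rw [← posPart_add_negPart x, hp, hn, ← posPart_add_negPart z, ← posPart_add_negPart u]
  abel

theorem my_frag_abs_le {x z : α} (hz : |z| ⊓ |x - z| = 0) : |z| ≤ |x| ∧ |x - z| ≤ |x| := by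
  obtain ⟨-, -, h⟩ := my_frag_struct hz
  constructor
  · rw [h]; exact le_add_of_nonneg_right (abs_nonneg _)
  · rw [h]; exact le_add_of_nonneg_left (abs_nonneg _)

theorem my_comp_inf {p a b : α} (ha0 : 0 ≤ a) (hb0 : 0 ≤ b) (hap : a ≤ p) (hbp : b ≤ p)
    (ha : a ⊓ (p - a) = 0) : (a ⊓ b) ⊓ (b - a ⊓ b) = 0 := by
  have hinf : a ⊓ b = a + b - a ⊔ b := by rw [← inf_add_sup a b]; abel
  have h1 : b - a ⊓ b ≤ p - a := by
    rw [hinf]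
    have hsp : a ⊔ b ≤ p := sup_le hap hbp
    calc b - (a + b - a ⊔ b) = a ⊔ b - a := by abel
      _ ≤ p - a := sub_le_sub_right hsp a
  have h2 : (0:α) ≤ b - a ⊓ b := sub_nonneg.2 inf_le_right
  exact le_antisymm ((inf_le_inf inf_le_left h1).trans ha.le)
    (le_inf (le_inf ha0 hb0) h2)
end Frag

section Frag2
variable {α : Type*} [Lattice α] [AddCommGroup α] [CovariantClass α α (· + ·) (· ≤ ·)]

theorem my_frag_half {x y z : α} (hxy : |x| ⊓ |y| = 0) (hz : |z| ⊓ |x + y - z| = 0) :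
    |z⁺ ⊓ x⁺ - z⁻ ⊓ x⁻| = z⁺ ⊓ x⁺ + z⁻ ⊓ x⁻ ∧
    |x - (z⁺ ⊓ x⁺ - z⁻ ⊓ x⁻)| = (x⁺ - z⁺ ⊓ x⁺) + (x⁻ - z⁻ ⊓ x⁻) ∧
    |z⁺ ⊓ x⁺ - z⁻ ⊓ x⁻| ⊓ |x - (z⁺ ⊓ x⁺ - z⁻ ⊓ x⁻)| = 0 := by
  have e1 : x + y - x = y := by abel
  have hx_frag : |x| ⊓ |x + y - x| = 0 := by rw [e1]; exact hxy
  obtain ⟨hp_xy, hn_xy, -⟩ := my_frag_struct hx_frag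
  rw [e1] at hp_xy hn_xy
  obtain ⟨hp_z, hn_z, -⟩ := my_frag_struct hz
  have hzw_p : z⁺ ⊓ (x + y - z)⁺ = 0 := my_disjoint_mono (posPart_nonneg _) (posPart_nonneg _)
    (my_posPart_le_abs _) (my_posPart_le_abs _) hz
  have hzw_n : z⁻ ⊓ (x + y - z)⁻ = 0 := my_disjoint_mono (negPart_nonneg _) (negPart_nonneg _)
    (my_negPart_le_abs _) (my_negPart_le_abs _) hz
  -- bounds
  have hzp_le : z⁺ ≤ (x + y)⁺ := by rw [hp_z]; exact le_add_of_nonneg_right (posPart_nonneg _)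
  have hzn_le : z⁻ ≤ (x + y)⁻ := by rw [hn_z]; exact le_add_of_nonneg_right (negPart_nonneg _)
  have hxp_le : x⁺ ≤ (x + y)⁺ := by rw [hp_xy]; exact le_add_of_nonneg_right (posPart_nonneg _)
  have hxn_le : x⁻ ≤ (x + y)⁻ := by rw [hn_xy]; exact le_add_of_nonneg_right (negPart_nonneg _)
  have hsub_p : (x + y)⁺ - z⁺ = (x + y - z)⁺ := by rw [hp_z]; abel
  have hsub_n : (x + y)⁻ - z⁻ = (x + y - z)⁻ := by rw [hn_z]; abel
  -- abs formulas
  have hd1 : (z⁺ ⊓ x⁺) ⊓ (z⁻ ⊓ x⁻) = 0 := my_disjoint_mono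
    (le_inf (posPart_nonneg _) (posPart_nonneg _)) (le_inf (negPart_nonneg _) (negPart_nonneg _))
    inf_le_left inf_le_left (posPart_inf_negPart_eq_zero z)
  have habs1 : |z⁺ ⊓ x⁺ - z⁻ ⊓ x⁻| = z⁺ ⊓ x⁺ + z⁻ ⊓ x⁻ := my_abs_of_disjoint hd1 rfl
  have hb1 : (0:α) ≤ x⁺ - z⁺ ⊓ x⁺ := sub_nonneg.2 inf_le_right
  have hb2 : (0:α) ≤ x⁻ - z⁻ ⊓ x⁻ := sub_nonneg.2 inf_le_right
  have hd2 : (x⁺ - z⁺ ⊓ x⁺) ⊓ (x⁻ - z⁻ ⊓ x⁻) = 0 := my_disjoint_mono hb1 hb2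
    (sub_le_self _ (le_inf (posPart_nonneg _) (posPart_nonneg _)))
    (sub_le_self _ (le_inf (negPart_nonneg _) (negPart_nonneg _)))
    (posPart_inf_negPart_eq_zero x)
  have he2 : x - (z⁺ ⊓ x⁺ - z⁻ ⊓ x⁻) = (x⁺ - z⁺ ⊓ x⁺) - (x⁻ - z⁻ ⊓ x⁻) := by
    have hx := posPart_sub_negPart x
    calc x - (z⁺ ⊓ x⁺ - z⁻ ⊓ x⁻) = (x⁺ - x⁻) - (z⁺ ⊓ x⁺ - z⁻ ⊓ x⁻) := by rw [hx]
      _ = (x⁺ - z⁺ ⊓ x⁺) - (x⁻ - z⁻ ⊓ x⁻) := by abel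
  have habs2 : |x - (z⁺ ⊓ x⁺ - z⁻ ⊓ x⁻)| = (x⁺ - z⁺ ⊓ x⁺) + (x⁻ - z⁻ ⊓ x⁻) :=
    my_abs_of_disjoint hd2 he2
  refine ⟨habs1, habs2, ?_⟩
  rw [habs1, habs2]
  refine my_disjoint_add_inf (le_inf (posPart_nonneg _) (posPart_nonneg _))
    (le_inf (negPart_nonneg _) (negPart_nonneg _)) hb1 hb2 ?_ ?_ ?_ ?_
  · exact my_comp_inf (posPart_nonneg _) (posPart_nonneg _) hzp_le hxp_le
      (by rw [hsub_p]; exact hzw_p)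
  · exact my_disjoint_mono (le_inf (posPart_nonneg _) (posPart_nonneg _)) hb2
      inf_le_right (sub_le_self _ (le_inf (negPart_nonneg _) (negPart_nonneg _)))
      (posPart_inf_negPart_eq_zero x)
  · exact my_disjoint_mono (le_inf (negPart_nonneg _) (negPart_nonneg _)) hb1
      inf_le_right (sub_le_self _ (le_inf (posPart_nonneg _) (posPart_nonneg _)))
      (by rw [inf_comm]; exact posPart_inf_negPart_eq_zero x)
  · exact my_comp_inf (negPart_nonneg _) (negPart_nonneg _) hzn_le hxn_le
      (by rw [hsub_n]; exact hzw_n)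

theorem my_frag_decomp {x y z : α} (hxy : |x| ⊓ |y| = 0) (hz : |z| ⊓ |x + y - z| = 0) :
    ∃ z₁ z₂ : α, z = z₁ + z₂ ∧ |z₁| ⊓ |x - z₁| = 0 ∧ |z₂| ⊓ |y - z₂| = 0 ∧
      |z₁| ⊓ |z₂| = 0 ∧ |x - z₁| ⊓ |y - z₂| = 0 ∧ x + y - z = (x - z₁) + (y - z₂) := by
  have hyx : |y| ⊓ |x| = 0 := by rw [inf_comm]; exact hxy
  have hz' : |z| ⊓ |y + x - z| = 0 := by rw [add_comm y x]; exact hz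
  obtain ⟨habs1x, habs2x, hfragx⟩ := my_frag_half hxy hz
  obtain ⟨habs1y, habs2y, hfragy⟩ := my_frag_half hyx hz'
  set z₁ := z⁺ ⊓ x⁺ - z⁻ ⊓ x⁻ with hz₁
  set z₂ := z⁺ ⊓ y⁺ - z⁻ ⊓ y⁻ with hz₂
  -- decomposition of z⁺ and z⁻
  have e1 : x + y - x = y := by abel
  have hx_frag : |x| ⊓ |x + y - x| = 0 := by rw [e1]; exact hxy
  obtain ⟨hp_xy, hn_xy, -⟩ := my_frag_struct hx_frag
  rw [e1] at hp_xy hn_xy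
  obtain ⟨hp_z, hn_z, -⟩ := my_frag_struct hz
  have hxpyp : x⁺ ⊓ y⁺ = 0 := my_disjoint_mono (posPart_nonneg _) (posPart_nonneg _)
    (my_posPart_le_abs _) (my_posPart_le_abs _) hxy
  have hxnyn : x⁻ ⊓ y⁻ = 0 := my_disjoint_mono (negPart_nonneg _) (negPart_nonneg _)
    (my_negPart_le_abs _) (my_negPart_le_abs _) hxy
  have hzp_le : z⁺ ≤ x⁺ + y⁺ := by
    rw [← hp_xy, hp_z]; exact le_add_of_nonneg_right (posPart_nonneg _)
  have hzn_le : z⁻ ≤ x⁻ + y⁻ := by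
    rw [← hn_xy, hn_z]; exact le_add_of_nonneg_right (negPart_nonneg _)
  have hdecp : z⁺ = z⁺ ⊓ x⁺ + z⁺ ⊓ y⁺ :=
    my_decomp (posPart_nonneg _) (posPart_nonneg _) (posPart_nonneg _) hzp_le hxpyp
  have hdecn : z⁻ = z⁻ ⊓ x⁻ + z⁻ ⊓ y⁻ :=
    my_decomp (negPart_nonneg _) (negPart_nonneg _) (negPart_nonneg _) hzn_le hxnyn
  have hsum : z = z₁ + z₂ := by
    calc z = z⁺ - z⁻ := (posPart_sub_negPart z).symm
      _ = (z⁺ ⊓ x⁺ + z⁺ ⊓ y⁺) - (z⁻ ⊓ x⁻ + z⁻ ⊓ y⁻) := by rw [← hdecp, ← hdecn]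
      _ = z₁ + z₂ := by rw [hz₁, hz₂]; abel
  refine ⟨z₁, z₂, hsum, hfragx, hfragy, ?_, ?_, ?_⟩
  · -- |z₁| ⊓ |z₂| = 0 via |z₁| ≤ |x|, |z₂| ≤ |y|
    refine my_disjoint_mono (abs_nonneg _) (abs_nonneg _) ?_ ?_ hxy
    · rw [habs1x, ← posPart_add_negPart x]
      exact add_le_add inf_le_right inf_le_right
    · rw [habs1y, ← posPart_add_negPart y]
      exact add_le_add inf_le_right inf_le_right
  · refine my_disjoint_mono (abs_nonneg _) (abs_nonneg _) ?_ ?_ hxy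
    · rw [habs2x, ← posPart_add_negPart x]
      exact add_le_add (sub_le_self _ (le_inf (posPart_nonneg _) (posPart_nonneg _)))
        (sub_le_self _ (le_inf (negPart_nonneg _) (negPart_nonneg _)))
    · rw [habs2y, ← posPart_add_negPart y]
      exact add_le_add (sub_le_self _ (le_inf (posPart_nonneg _) (posPart_nonneg _)))
        (sub_le_self _ (le_inf (negPart_nonneg _) (negPart_nonneg _)))
  · have h : (x - z₁) + (y - z₂) = x + y - (z₁ + z₂) := by abel
    rw [h, ← hsum]

theorem my_frag_add {x y z₁ z₂ : α} (hxy : |x| ⊓ |y| = 0)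
    (h1 : |z₁| ⊓ |x - z₁| = 0) (h2 : |z₂| ⊓ |y - z₂| = 0) :
    |z₁ + z₂| ⊓ |x + y - (z₁ + z₂)| = 0 ∧ |z₁| ⊓ |z₂| = 0 ∧
      |x - z₁| ⊓ |y - z₂| = 0 ∧ x + y - (z₁ + z₂) = (x - z₁) + (y - z₂) := by
  have hyx : |y| ⊓ |x| = 0 := by rw [inf_comm]; exact hxy
  obtain ⟨hz1x, hxz1x⟩ := my_frag_abs_le h1
  obtain ⟨hz2y, hyz2y⟩ := my_frag_abs_le h2
  have d12 : |z₁| ⊓ |z₂| = 0 :=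
    my_disjoint_mono (abs_nonneg _) (abs_nonneg _) hz1x hz2y hxy
  have d34 : |x - z₁| ⊓ |y - z₂| = 0 :=
    my_disjoint_mono (abs_nonneg _) (abs_nonneg _) hxz1x hyz2y hxy
  have d14 : |z₁| ⊓ |y - z₂| = 0 :=
    my_disjoint_mono (abs_nonneg _) (abs_nonneg _) hz1x hyz2y hxy
  have d32 : |z₂| ⊓ |x - z₁| = 0 :=
    my_disjoint_mono (abs_nonneg _) (abs_nonneg _) hz2y hxz1x hyx
  have he : x + y - (z₁ + z₂) = (x - z₁) + (y - z₂) := by abel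
  have ha1 : |z₁ + z₂| ≤ |z₁| + |z₂| := abs_add_le _ _
  have ha2 : |x + y - (z₁ + z₂)| ≤ |x - z₁| + |y - z₂| := by rw [he]; exact abs_add_le _ _
  refine ⟨?_, d12, d34, he⟩
  refine my_disjoint_mono (abs_nonneg _) (abs_nonneg _) ha1 ha2 ?_
  exact my_disjoint_add_inf (abs_nonneg _) (abs_nonneg _) (abs_nonneg _) (abs_nonneg _)
    (my_disjoint_mono (abs_nonneg _) (abs_nonneg _) le_rfl le_rfl h1) d14 d32
    (my_disjoint_mono (abs_nonneg _) (abs_nonneg _) le_rfl le_rfl h2)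
end Frag2

section Proj
variable {F : Type*} [ConditionallyCompleteLattice F] [AddCommGroup F]
  [CovariantClass F F (· + ·) (· ≤ ·)]

/-- positive part of the band projection onto the band generated by `b`. -/
noncomputable def projP (b x : F) : F := sSup (Set.range fun n : ℕ => x ⊓ n • b)

/-- band projection onto the band generated by `b`. -/
noncomputable def proj (b x : F) : F := projP b x⁺ - projP b x⁻

theorem projP_bdd (b x : F) : BddAbove (Set.range fun n : ℕ => x ⊓ n • b) :=
  ⟨x, by rintro y ⟨n, rfl⟩; exact inf_le_left⟩

theorem projP_le (b x : F) : projP b x ≤ x :=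
  csSup_le (Set.range_nonempty _) (by rintro y ⟨n, rfl⟩; exact inf_le_left)

theorem le_projP (b x : F) (n : ℕ) : x ⊓ n • b ≤ projP b x :=
  le_csSup (projP_bdd b x) ⟨n, rfl⟩

theorem projP_nonneg {b x : F} (hx : 0 ≤ x) : 0 ≤ projP b x := by
  have h0 : x ⊓ (0:ℕ) • b = 0 := by
    rw [zero_smul]; exact inf_eq_right.2 hx
  calc (0:F) = x ⊓ (0:ℕ) • b := h0.symm
    _ ≤ projP b x := le_projP b x 0

theorem projP_mono {b x y : F} (hxy : x ≤ y) : projP b x ≤ projP b y := by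
  refine csSup_le (Set.range_nonempty _) ?_
  rintro w ⟨n, rfl⟩
  exact le_trans (inf_le_inf_right _ hxy) (le_projP b y n)

theorem projP_add {b x y : F} (hb : 0 ≤ b) (hx : 0 ≤ x) (hy : 0 ≤ y) :
    projP b (x + y) = projP b x + projP b y := by
  refine le_antisymm ?_ ?_
  · refine csSup_le (Set.range_nonempty _) ?_
    rintro w ⟨n, rfl⟩
    have hnb : (0:F) ≤ n • b := nsmul_nonneg hb n
    have h1 : (x + y) ⊓ n • b ≤ x ⊓ n • b + y ⊓ n • b := by
      rw [inf_comm, inf_comm x, inf_comm y]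
      exact my_inf_add_le hnb hx hy
    exact h1.trans (add_le_add (le_projP b x n) (le_projP b y n))
  · have key : ∀ n m : ℕ, x ⊓ n • b + y ⊓ m • b ≤ projP b (x + y) := by
      intro n m
      have h1 : x ⊓ n • b + y ⊓ m • b ≤ (x + y) ⊓ ((n + m) • b) := by
        refine le_inf (add_le_add inf_le_left inf_le_left) ?_
        rw [add_nsmul]
        exact add_le_add inf_le_right inf_le_right
      exact h1.trans (le_projP b (x + y) (n + m))
    have h2 : ∀ n : ℕ, projP b y ≤ projP b (x + y) - x ⊓ n • b := by
      intro n
      refine csSup_le (Set.range_nonempty _) ?_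
      rintro w ⟨m, rfl⟩
      rw [le_sub_iff_add_le, add_comm]
      exact key n m
    have h3 : projP b x ≤ projP b (x + y) - projP b y := by
      refine csSup_le (Set.range_nonempty _) ?_
      rintro w ⟨n, rfl⟩
      rw [le_sub_iff_add_le, add_comm]
      exact le_sub_iff_add_le.1 (h2 n)
    rw [le_sub_iff_add_le] at h3
    exact h3

end Proj

section Proj2
variable {F : Type*} [ConditionallyCompleteLattice F] [AddCommGroup F]
  [CovariantClass F F (· + ·) (· ≤ ·)]

theorem projP_zero_of (b : F) {y : F} (h : ∀ n : ℕ, y ⊓ n • b = 0) : projP b y = 0 := by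
  refine le_antisymm (csSup_le (Set.range_nonempty _) ?_) ?_
  · rintro w ⟨n, rfl⟩; exact (h n).le
  · calc (0:F) = y ⊓ (0:ℕ) • b := (h 0).symm
      _ ≤ projP b y := le_projP b y 0

theorem projP_zero {b : F} (hb : 0 ≤ b) : projP b 0 = 0 :=
  projP_zero_of b fun n => inf_eq_left.2 (nsmul_nonneg hb n)

theorem projP_idem {b x : F} (hx : 0 ≤ x) : projP b (projP b x) = projP b x := by
  refine le_antisymm (projP_le _ _) ?_
  refine csSup_le (Set.range_nonempty _) ?_
  rintro w ⟨n, rfl⟩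
  have h1 : x ⊓ n • b ≤ projP b x ⊓ n • b := le_inf (le_projP b x n) inf_le_right
  exact h1.trans (le_projP b (projP b x) n)

/-- the "sup-disjointness" trick. -/
theorem my_sup_trick {v : F} {s : Set F} (hne : s.Nonempty) (hbdd : BddAbove s)
    (hv : 0 ≤ v) (hle : v ≤ sSup s) (h : ∀ y ∈ s, 0 ≤ y ∧ v ⊓ y = 0) : v = 0 := by
  have h1 : ∀ y ∈ s, y ≤ sSup s - v := by
    intro y hy
    rw [le_sub_iff_add_le]
    have h2 : y + v = y ⊔ v := my_sum_eq_sup (by rw [inf_comm]; exact (h y hy).2)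
    rw [h2]
    exact sup_le (le_csSup hbdd hy) hle
  have h3 : sSup s ≤ sSup s - v := csSup_le hne h1
  rw [le_sub_iff_add_le, add_comm] at h3
  exact le_antisymm (by exact_mod_cast le_of_add_le_add_right (h3.trans_eq (zero_add _).symm)) hv

theorem projP_compl_disj {b x : F} (hb : 0 ≤ b) (hx : 0 ≤ x) :
    (x - projP b x) ⊓ b = 0 := by
  set d := x - projP b x with hd
  have hd0 : 0 ≤ d := sub_nonneg.2 (projP_le b x)
  have key : ∀ n : ℕ, x ⊓ n • b + d ⊓ b ≤ x ⊓ (n + 1) • b := by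
    intro n
    refine le_inf ?_ ?_
    · calc x ⊓ n • b + d ⊓ b ≤ projP b x + d := add_le_add (le_projP b x n) inf_le_left
        _ = x := by rw [hd]; abel
    · rw [succ_nsmul]
      exact add_le_add inf_le_right inf_le_right
  have h2 : ∀ n : ℕ, x ⊓ n • b ≤ projP b x - d ⊓ b := by
    intro n
    rw [le_sub_iff_add_le]
    exact (key n).trans (le_projP b x (n + 1))
  have h3 : projP b x ≤ projP b x - d ⊓ b := by
    refine csSup_le (Set.range_nonempty _) ?_
    rintro w ⟨n, rfl⟩
    exact h2 n
  rw [le_sub_iff_add_le, add_comm] at h3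
  have h4 : d ⊓ b ≤ 0 := le_of_add_le_add_right (h3.trans_eq (zero_add _).symm)
  exact le_antisymm h4 (le_inf hd0 hb)

theorem disj_of_band {b x y : F} (hb : 0 ≤ b) (hx : 0 ≤ x) (hy : 0 ≤ y)
    (hxb : projP b x = x) (hyb : y ⊓ b = 0) : y ⊓ x = 0 := by
  set v := y ⊓ x with hv
  have hv0 : 0 ≤ v := le_inf hy hx
  refine my_sup_trick (Set.range_nonempty _) (projP_bdd b x) hv0 ?_ ?_
  · show v ≤ projP b x
    rw [hxb]; exact inf_le_right
  · rintro w ⟨n, rfl⟩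
    have hw0 : (0:F) ≤ x ⊓ n • b := le_inf hx (nsmul_nonneg hb n)
    refine ⟨hw0, ?_⟩
    have h1 : v ⊓ (x ⊓ n • b) ≤ y ⊓ n • b := inf_le_inf inf_le_left inf_le_right
    have h2 : y ⊓ n • b = 0 := my_disjoint_nsmul hy hb hyb n
    exact le_antisymm (h1.trans h2.le) (le_inf hv0 hw0)

theorem band_hereditary {b c d : F} (hb : 0 ≤ b) (hc : 0 ≤ c) (hcd : c ≤ d)
    (hd : projP b d = d) : projP b c = c := by
  set v := c - projP b c with hv
  have hv0 : 0 ≤ v := sub_nonneg.2 (projP_le b c)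
  have hvb : v ⊓ b = 0 := projP_compl_disj hb hc
  have hd0 : 0 ≤ d := le_trans hc hcd
  have hvx : v ⊓ d = 0 := disj_of_band hb hd0 hv0 hd hvb
  have h1 : v ≤ d := le_trans (sub_le_self _ (projP_nonneg hc)) hcd
  have h2 : v = v ⊓ d := (inf_eq_left.2 h1).symm
  have h3 : v = 0 := by rw [h2, hvx]
  have := sub_eq_zero.1 (hv ▸ h3)
  exact this.symm

theorem projP_disj {b c x : F} (hb : 0 ≤ b) (hc : 0 ≤ c) (hbc : b ⊓ c = 0) (hx : 0 ≤ x) :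
    projP b x ⊓ projP c x = 0 := by
  have hPb0 : 0 ≤ projP b x := projP_nonneg hx
  have hPc0 : 0 ≤ projP c x := projP_nonneg hx
  have h1 : c ⊓ projP b x = 0 :=
    disj_of_band hb hPb0 hc (projP_idem hx) (by rw [inf_comm]; exact hbc)
  exact disj_of_band hc hPc0 hPb0 (projP_idem hx) (by rw [inf_comm]; exact h1)

end Proj2

section Proj3
variable {F : Type*} [ConditionallyCompleteLattice F] [AddCommGroup F]
  [CovariantClass F F (· + ·) (· ≤ ·)]

theorem proj_eq_projP {b x : F} (hb : 0 ≤ b) (hx : 0 ≤ x) : proj b x = projP b x := by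
  unfold proj
  rw [posPart_eq_self.2 hx, negPart_eq_zero.2 hx, projP_zero hb, sub_zero]

theorem proj_sub' {b a p q : F} (hb : 0 ≤ b) (hp : 0 ≤ p) (hq : 0 ≤ q)
    (ha : a = p - q) : proj b a = projP b p - projP b q := by
  have h1 : a⁺ - a⁻ = p - q := by rw [posPart_sub_negPart]; exact ha
  have h2 : a⁺ + q = p + a⁻ := sub_eq_sub_iff_add_eq_add.1 h1
  have h3 : projP b (a⁺ + q) = projP b (p + a⁻) := by rw [h2]
  rw [projP_add hb (posPart_nonneg a) hq, projP_add hb hp (negPart_nonneg a)] at h3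
  unfold proj
  rw [sub_eq_sub_iff_add_eq_add]
  exact h3

theorem proj_add {b : F} (hb : 0 ≤ b) (x y : F) :
    proj b (x + y) = proj b x + proj b y := by
  have hxy : x + y = (x⁺ + y⁺) - (x⁻ + y⁻) := by
    have hx := posPart_sub_negPart x
    have hy := posPart_sub_negPart y
    calc x + y = (x⁺ - x⁻) + (y⁺ - y⁻) := by rw [hx, hy]
      _ = (x⁺ + y⁺) - (x⁻ + y⁻) := by abel
  rw [proj_sub' hb (add_nonneg (posPart_nonneg x) (posPart_nonneg y))
    (add_nonneg (negPart_nonneg x) (negPart_nonneg y)) hxy,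
    projP_add hb (posPart_nonneg x) (posPart_nonneg y),
    projP_add hb (negPart_nonneg x) (negPart_nonneg y)]
  unfold proj
  abel

theorem proj_idem {b : F} (hb : 0 ≤ b) (x : F) : proj b (proj b x) = proj b x := by
  have h : proj b x = projP b x⁺ - projP b x⁻ := rfl
  rw [proj_sub' hb (projP_nonneg (posPart_nonneg x)) (projP_nonneg (negPart_nonneg x)) h,
    projP_idem (posPart_nonneg x), projP_idem (negPart_nonneg x)]
  exact h.symm

theorem isBandProj_proj {b : F} (hb : 0 ≤ b) : IsBandProj (proj b) := by
  refine ⟨proj_add hb, proj_idem hb, fun x hx => ?_⟩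
  rw [proj_eq_projP hb hx]
  exact ⟨projP_nonneg hx, projP_le b x⟩

theorem proj_mono {b : F} (hb : 0 ≤ b) {x y : F} (hxy : x ≤ y) : proj b x ≤ proj b y := by
  have h1 : proj b y - proj b x = proj b (y - x) := by
    have := proj_add hb (y - x) x
    rw [sub_add_cancel] at this
    rw [this]; abel
  have h2 : 0 ≤ proj b (y - x) := by
    rw [proj_eq_projP hb (sub_nonneg.2 hxy)]
    exact projP_nonneg (sub_nonneg.2 hxy)
  rw [← sub_nonneg, h1]
  exact h2

theorem projP_split {d₁ d₂ x : F} (h1 : 0 ≤ d₁) (h2 : 0 ≤ d₂) (hd : d₁ ⊓ d₂ = 0)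
    (hx : 0 ≤ x) : projP (d₁ + d₂) x = projP d₁ x + projP d₂ x := by
  refine le_antisymm ?_ ?_
  · refine csSup_le (Set.range_nonempty _) ?_
    rintro w ⟨n, rfl⟩
    have key : x ⊓ n • (d₁ + d₂) ≤ x ⊓ n • d₁ + x ⊓ n • d₂ := by
      rw [smul_add]
      calc x ⊓ (n • d₁ + n • d₂) ≤ x ⊓ (n • d₁) + x ⊓ (n • d₂) :=
            my_inf_add_le hx (nsmul_nonneg h1 n) (nsmul_nonneg h2 n)
        _ = _ := rfl
    exact key.trans (add_le_add (le_projP _ x n) (le_projP _ x n))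
  · have key : ∀ n m : ℕ, x ⊓ n • d₁ + x ⊓ m • d₂ ≤ projP (d₁ + d₂) x := by
      intro n m
      have hdisj : (x ⊓ n • d₁) ⊓ (x ⊓ m • d₂) = 0 :=
        my_disjoint_mono (le_inf hx (nsmul_nonneg h1 n)) (le_inf hx (nsmul_nonneg h2 m))
          inf_le_right inf_le_right (my_disjoint_nsmul' h1 h2 hd n m)
      have hle : x ⊓ n • d₁ + x ⊓ m • d₂ ≤ x ⊓ ((n + m) • (d₁ + d₂)) := by
        refine le_inf (my_add_le_of_disjoint hdisj inf_le_left inf_le_left) ?_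
        have e1 : n • d₁ ≤ (n + m) • (d₁ + d₂) := by
          rw [smul_add]
          exact le_add_of_le_of_nonneg (nsmul_le_nsmul_left h1 (Nat.le_add_right n m))
            (nsmul_nonneg h2 _)
        have e2 : m • d₂ ≤ (n + m) • (d₁ + d₂) := by
          rw [smul_add]
          exact le_add_of_nonneg_of_le (nsmul_nonneg h1 _)
            (nsmul_le_nsmul_left h2 (Nat.le_add_left m n))
        exact my_add_le_of_disjoint hdisj (inf_le_right.trans e1) (inf_le_right.trans e2)
      exact hle.trans (le_projP _ x (n + m))
    have h3 : ∀ n : ℕ, projP d₂ x ≤ projP (d₁ + d₂) x - x ⊓ n • d₁ := by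
      intro n
      refine csSup_le (Set.range_nonempty _) ?_
      rintro w ⟨m, rfl⟩
      rw [le_sub_iff_add_le, add_comm]
      exact key n m
    have h4 : projP d₁ x ≤ projP (d₁ + d₂) x - projP d₂ x := by
      refine csSup_le (Set.range_nonempty _) ?_
      rintro w ⟨n, rfl⟩
      rw [le_sub_iff_add_le, add_comm]
      exact le_sub_iff_add_le.1 (h3 n)
    rw [le_sub_iff_add_le] at h4
    exact h4
end Proj3

section Smul
variable {F : Type*} [ConditionallyCompleteLattice F] [AddCommGroup F]
  [CovariantClass F F (· + ·) (· ≤ ·)] [Module ℝ F] [PosSMulMono ℝ F]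

theorem my_smul_nonneg {ε : ℝ} (hε : 0 ≤ ε) {x : F} (hx : 0 ≤ x) : 0 ≤ ε • x := by
  have := smul_le_smul_of_nonneg_left hx hε
  rwa [smul_zero] at this

theorem my_smul_le_self {ε : ℝ} (h0 : 0 ≤ ε) (h1 : ε ≤ 1) {x : F} (hx : 0 ≤ x) : ε • x ≤ x := by
  have h2 : (0:F) ≤ (1 - ε) • x := my_smul_nonneg (by linarith) hx
  have e : x - ε • x = (1 - ε) • x := by rw [sub_smul, one_smul]
  rw [← sub_nonneg, e]
  exact h2

theorem my_smul_mono_scalar {ε δ : ℝ} (h : ε ≤ δ) {x : F} (hx : 0 ≤ x) : ε • x ≤ δ • x := by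
  rw [← sub_nonneg, ← sub_smul]
  exact my_smul_nonneg (by linarith) hx

theorem projP_smul {b x : F} {ε : ℝ} (h0 : 0 < ε) (h1 : ε ≤ 1) (hb : 0 ≤ b) (hx : 0 ≤ x) :
    ε • projP b x ≤ projP b (ε • x) := by
  have step1 : ∀ n : ℕ, ε • (x ⊓ n • b) ≤ (ε • x) ⊓ (n • b) := by
    intro n
    refine le_inf (smul_le_smul_of_nonneg_left inf_le_left h0.le) ?_
    calc ε • (x ⊓ n • b) ≤ ε • (n • b) := smul_le_smul_of_nonneg_left inf_le_right h0.le
      _ ≤ n • b := my_smul_le_self h0.le h1 (nsmul_nonneg hb n)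
  have step2 : projP b x ≤ ε⁻¹ • projP b (ε • x) := by
    refine csSup_le (Set.range_nonempty _) ?_
    rintro w ⟨n, rfl⟩
    have h2 : ε • (x ⊓ n • b) ≤ projP b (ε • x) := (step1 n).trans (le_projP b (ε • x) n)
    have h3 := smul_le_smul_of_nonneg_left h2 (inv_nonneg.2 h0.le)
    rwa [inv_smul_smul₀ h0.ne'] at h3
  have h4 := smul_le_smul_of_nonneg_left step2 h0.le
  rwa [smul_inv_smul₀ h0.ne'] at h4

theorem my_arch {a b : F} (h : ∀ n : ℕ, n • a ≤ b) : a ≤ 0 := by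
  set s := sSup (Set.range fun n : ℕ => n • a) with hs
  have hbdd : BddAbove (Set.range fun n : ℕ => n • a) := ⟨b, by rintro w ⟨n, rfl⟩; exact h n⟩
  have h1 : ∀ n : ℕ, n • a ≤ s - a := by
    intro n
    rw [le_sub_iff_add_le]
    have : n • a + a = (n + 1) • a := by rw [succ_nsmul]
    rw [this]
    exact le_csSup hbdd ⟨n + 1, rfl⟩
  have h2 : s ≤ s - a := csSup_le (Set.range_nonempty _) (by rintro w ⟨n, rfl⟩; exact h1 n)
  rw [le_sub_iff_add_le, add_comm] at h2
  exact le_of_add_le_add_right (h2.trans_eq (zero_add _).symm)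

theorem my_smul_arch {a u : F} (hu : 0 ≤ u) (h : ∀ ε : ℝ, 0 < ε → a ≤ ε • u) : a ≤ 0 := by
  refine my_arch (b := u) fun n => ?_
  cases n with
  | zero => rw [zero_smul]; exact hu
  | succ k =>
    have hk : (0:ℝ) < (k + 1 : ℕ) := by positivity
    have h1 : a ≤ ((k + 1 : ℕ) : ℝ)⁻¹ • u := h _ (by positivity)
    have h2 := smul_le_smul_of_nonneg_left h1 hk.le
    rw [smul_inv_smul₀ hk.ne'] at h2
    rwa [Nat.cast_smul_eq_nsmul] at h2
end Smul

section Part1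
variable {E F : Type*} [Lattice E] [AddCommGroup E]
    [CovariantClass E E (· + ·) (· ≤ ·)]
    [ConditionallyCompleteLattice F] [AddCommGroup F]
    [CovariantClass F F (· + ·) (· ≤ ·)]

theorem frag_self (x : E) : Fragment x x := by
  unfold Fragment; rw [sub_self, abs_zero]; exact inf_eq_right.2 (abs_nonneg x)

theorem frag_zero (x : E) : Fragment 0 x := by
  unfold Fragment; rw [abs_zero, sub_zero]; exact inf_eq_left.2 (abs_nonneg x)

theorem map_zero_of_orthAdd {T : E → F} (h : OrthAdd T) : T 0 = 0 := by
  have h1 := h 0 0 (by rw [abs_zero]; exact inf_idem 0)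
  rw [add_zero] at h1
  exact add_eq_left.1 h1.symm

theorem part1 (T S : E → F) (hT : Uryson T) (hTpos : ∀ x, 0 ≤ T x)
    (hS : Uryson S) (hSpos : ∀ x, 0 ≤ S x) (hdisj : UDisjointPos T S)
    (e : E) (c : F) (hc : ∀ z : E, Fragment z e → c ≤ T z + S (e - z)) : c ≤ 0 := by
  classical
  set A : E → Set F := fun x => {w | ∃ z, Fragment z x ∧ w = T z + S (x - z)} with hA
  set R : E → F := fun x => sInf (A x) with hR
  have hT0 : T 0 = 0 := map_zero_of_orthAdd hT.1
  have hS0 : S 0 = 0 := map_zero_of_orthAdd hS.1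
  have hAne : ∀ x, (A x).Nonempty := fun x => ⟨T x + S (x - x), x, frag_self x, rfl⟩
  have hAbdd : ∀ x, BddBelow (A x) := fun x => ⟨0, by
    rintro w ⟨z, hz, rfl⟩; exact add_nonneg (hTpos z) (hSpos _)⟩
  have hRle : ∀ x z, Fragment z x → R x ≤ T z + S (x - z) := fun x z hz =>
    csInf_le (hAbdd x) ⟨z, hz, rfl⟩
  have hRpos : ∀ x, 0 ≤ R x := fun x => le_csInf (hAne x) (by
    rintro w ⟨z, hz, rfl⟩; exact add_nonneg (hTpos z) (hSpos _))
  have hRT : ∀ x, R x ≤ T x := fun x => by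
    have h1 := hRle x x (frag_self x)
    rwa [sub_self, hS0, add_zero] at h1
  have hRS : ∀ x, R x ≤ S x := fun x => by
    have h1 := hRle x 0 (frag_zero x)
    rwa [hT0, sub_zero, zero_add] at h1
  have hOrth : OrthAdd R := by
    intro x y hxy
    refine le_antisymm ?_ ?_
    · have key : ∀ a ∈ A x, ∀ b ∈ A y, R (x + y) ≤ a + b := by
        rintro _ ⟨z₁, h₁, rfl⟩ _ ⟨z₂, h₂, rfl⟩
        obtain ⟨hfrag, hd12, hd34, heq⟩ := my_frag_add hxy h₁ h₂
        refine csInf_le (hAbdd _) ⟨z₁ + z₂, hfrag, ?_⟩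
        rw [hT.1 z₁ z₂ hd12, heq, hS.1 _ _ hd34]
        abel
      have k2 : ∀ a ∈ A x, R (x + y) - a ≤ R y :=
        fun a ha => le_csInf (hAne y) fun b hb => sub_le_iff_le_add'.2 (key a ha b hb)
      have k3 : R (x + y) - R y ≤ R x := by
        refine le_csInf (hAne x) fun a ha => ?_
        rw [sub_le_iff_le_add]
        exact (sub_le_iff_le_add.1 (k2 a ha)).trans_eq (add_comm _ _)
      exact sub_le_iff_le_add.1 k3
    · refine le_csInf (hAne _) ?_
      rintro w ⟨z, hz, rfl⟩
      obtain ⟨z₁, z₂, hzsum, hf1, hf2, hd12, hd34, heq⟩ := my_frag_decomp hxy hz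
      have e1 : T z = T z₁ + T z₂ := by rw [hzsum]; exact hT.1 z₁ z₂ hd12
      have e2 : S (x + y - z) = S (x - z₁) + S (y - z₂) := by
        rw [heq]; exact hS.1 _ _ hd34
      have m1 : R x ≤ T z₁ + S (x - z₁) := hRle x z₁ hf1
      have m2 : R y ≤ T z₂ + S (y - z₂) := hRle y z₂ hf2
      calc R x + R y ≤ (T z₁ + S (x - z₁)) + (T z₂ + S (y - z₂)) := add_le_add m1 m2
        _ = T z + S (x + y - z) := by rw [e1, e2]; abel
  have hBnd : OrderBoundedMap R := by
    intro a b
    obtain ⟨c', d', hcd⟩ := hT.2 a b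
    exact ⟨0, d', fun x hx => ⟨hRpos x, (hRT x).trans (hcd x hx).2⟩⟩
  have hR0 : R e ≤ 0 := hdisj R ⟨hOrth, hBnd⟩ hRT hRS e
  have hcR : c ≤ R e := le_csInf (hAne e) (by rintro w ⟨z, hz, rfl⟩; exact hc z hz)
  exact hcR.trans hR0
end Part1

section Part2
variable {E F : Type} [Lattice E] [AddCommGroup E]
    [CovariantClass E E (· + ·) (· ≤ ·)]
    [ConditionallyCompleteLattice F] [AddCommGroup F]
    [CovariantClass F F (· + ·) (· ≤ ·)] [Module ℝ F] [PosSMulMono ℝ F]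

theorem part2 (T S : E → F) (hT : Uryson T) (hTpos : ∀ x, 0 ≤ T x)
    (hS : Uryson S) (hSpos : ∀ x, 0 ≤ S x) (e : E)
    (hinf : ∀ c : F, (∀ z : E, Fragment z e → c ≤ T z + S (e - z)) → c ≤ 0)
    (ε : ℝ) (hε0 : 0 < ε) (hε1 : ε ≤ 1) :
    ∃ (ι : Type) (ρ : ι → F → F) (ea : ι → E),
      (∀ α, IsBandProj (ρ α)) ∧
      (∀ α β, α ≠ β → ∀ x : F, 0 ≤ x → ρ α x ⊓ ρ β x = 0) ∧
      (∀ x : F, 0 ≤ x → IsLUB (Set.range fun α => ρ α x) x) ∧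
      (∀ α, Fragment (ea α) e) ∧
      ∀ α, ρ α (T (ea α)) ≤ ε • T e ∧ ρ α (S (e - ea α)) ≤ ε • S e := by
  classical
  have hT0 : T 0 = 0 := map_zero_of_orthAdd hT.1
  have hS0 : S 0 = 0 := map_zero_of_orthAdd hS.1
  set Good : F → Prop := fun c => 0 ≤ c ∧ ∃ z : E, Fragment z e ∧
    proj c (T z) ≤ ε • T e ∧ proj c (S (e - z)) ≤ ε • S e with hGoodDef
  -- the KEY analytic lemma: every nonzero positive d contains a nonzero good piece
  have key : ∀ d : F, 0 ≤ d → d ≠ 0 → ∃ c', 0 ≤ c' ∧ c' ≤ d ∧ c' ≠ 0 ∧ Good c' := by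
    intro d hd0 hdne
    by_cases hc₁ : d - projP (S e) d = 0
    case neg =>
      -- c₁ works with fragment 0
      refine ⟨d - projP (S e) d, sub_nonneg.2 (projP_le _ d),
        sub_le_self _ (projP_nonneg hd0), hc₁, sub_nonneg.2 (projP_le _ d), 0, frag_zero e, ?_, ?_⟩
      · rw [hT0, proj_eq_projP (sub_nonneg.2 (projP_le _ d)) le_rfl,
          projP_zero (sub_nonneg.2 (projP_le _ d))]
        exact my_smul_nonneg hε0.le (hTpos e)
      · rw [sub_zero, proj_eq_projP (sub_nonneg.2 (projP_le _ d)) (hSpos e)]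
        have hdisj : (d - projP (S e) d) ⊓ S e = 0 := projP_compl_disj (hSpos e) hd0
        have h0 : projP (d - projP (S e) d) (S e) = 0 := by
          refine projP_zero_of _ fun n => ?_
          exact my_disjoint_nsmul (hSpos e) (sub_nonneg.2 (projP_le _ d))
            (by rw [inf_comm]; exact hdisj) n
        rw [h0]
        exact my_smul_nonneg hε0.le (hSpos e)
    case pos =>
    have hdSe : projP (S e) d = d := by
      have := sub_eq_zero.1 hc₁; exact this.symm
    by_cases hc₂ : d - projP (T e) d = 0
    case neg =>
      refine ⟨d - projP (T e) d, sub_nonneg.2 (projP_le _ d),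
        sub_le_self _ (projP_nonneg hd0), hc₂, sub_nonneg.2 (projP_le _ d), e, frag_self e, ?_, ?_⟩
      · rw [proj_eq_projP (sub_nonneg.2 (projP_le _ d)) (hTpos e)]
        have hdisj : (d - projP (T e) d) ⊓ T e = 0 := projP_compl_disj (hTpos e) hd0
        have h0 : projP (d - projP (T e) d) (T e) = 0 := by
          refine projP_zero_of _ fun n => ?_
          exact my_disjoint_nsmul (hTpos e) (sub_nonneg.2 (projP_le _ d))
            (by rw [inf_comm]; exact hdisj) n
        rw [h0]
        exact my_smul_nonneg hε0.le (hTpos e)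
      · rw [sub_self, hS0, proj_eq_projP (sub_nonneg.2 (projP_le _ d)) le_rfl,
          projP_zero (sub_nonneg.2 (projP_le _ d))]
        exact my_smul_nonneg hε0.le (hSpos e)
    case pos =>
    have hdTe : projP (T e) d = d := by
      have := sub_eq_zero.1 hc₂; exact this.symm
    set bz : E → F := fun z => (T z - ε • T e)⁺ ⊔ (S (e - z) - ε • S e)⁺ with hbz
    have hbz0 : ∀ z, 0 ≤ bz z := fun z => le_trans (posPart_nonneg _) le_sup_left
    by_cases h3 : ∃ z : E, Fragment z e ∧ d - projP (bz z) d ≠ 0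
    case pos =>
      obtain ⟨z, hzfrag, hne⟩ := h3
      set c₃ := d - projP (bz z) d with hc₃
      have hc₃0 : 0 ≤ c₃ := sub_nonneg.2 (projP_le _ d)
      have hc₃d : c₃ ≤ d := sub_le_self _ (projP_nonneg hd0)
      have hdisj : c₃ ⊓ bz z = 0 := projP_compl_disj (hbz0 z) hd0
      -- generic bound: for any g with g⁺ ≤ bz z, proj c₃ g ≤ 0
      have hbound : ∀ g : F, g⁺ ⊓ c₃ = 0 → proj c₃ g ≤ 0 := by
        intro g hg
        have h0 : projP c₃ g⁺ = 0 :=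
          projP_zero_of _ fun n => my_disjoint_nsmul (posPart_nonneg g) hc₃0 hg n
        show projP c₃ g⁺ - projP c₃ g⁻ ≤ 0
        rw [h0, zero_sub]
        exact neg_nonpos.2 (projP_nonneg (negPart_nonneg g))
      have hkey : ∀ g u : F, 0 ≤ u → g⁺ ⊓ c₃ = 0 → proj c₃ (u + g) ≤ u := by
        intro g u hu hg
        rw [proj_add hc₃0]
        have h1 : proj c₃ u ≤ u := by
          rw [proj_eq_projP hc₃0 hu]; exact projP_le _ _
        have h2 : proj c₃ g ≤ 0 := hbound g hg
        calc proj c₃ u + proj c₃ g ≤ u + 0 := add_le_add h1 h2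
          _ = u := add_zero u
      have hdisj' : ∀ w : F, w ≤ bz z → 0 ≤ w → w ⊓ c₃ = 0 := fun w hw hw0 =>
        my_disjoint_mono hw0 hc₃0 hw le_rfl (by rw [inf_comm]; exact hdisj)
      refine ⟨c₃, hc₃0, hc₃d, hne, hc₃0, z, hzfrag, ?_, ?_⟩
      · have e1 : ε • T e + (T z - ε • T e) = T z := by abel
        have h1 := hkey (T z - ε • T e) (ε • T e) (my_smul_nonneg hε0.le (hTpos e))
          (hdisj' _ le_sup_left (posPart_nonneg _))
        rwa [e1] at h1
      · have e1 : ε • S e + (S (e - z) - ε • S e) = S (e - z) := by abel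
        have h1 := hkey (S (e - z) - ε • S e) (ε • S e) (my_smul_nonneg hε0.le (hSpos e))
          (hdisj' _ le_sup_right (posPart_nonneg _))
        rwa [e1] at h1
    case neg =>
      -- contradiction: d must be 0
      exfalso
      push_neg at h3
      have hband : ∀ z : E, Fragment z e → projP (bz z) d = d := by
        intro z hz
        have := h3 z hz
        exact (sub_eq_zero.1 this).symm
      set hh := T e ⊓ S e with hhh
      have hh0 : 0 ≤ hh := le_inf (hTpos e) (hSpos e)
      -- main computation
      have hγ : ∀ z : E, Fragment z e → ε • projP d hh ≤ T z + S (e - z) := by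
        intro z hz
        set p := (T z - ε • T e)⁺ with hp
        set q := (S (e - z) - ε • S e)⁺ with hq
        have hp0 : (0:F) ≤ p := posPart_nonneg _
        have hq0 : (0:F) ≤ q := posPart_nonneg _
        have hb0 : (0:F) ≤ p ⊔ q := le_trans hp0 le_sup_left
        have hbandz : projP (p ⊔ q) d = d := hband z hz
        set d₁ := projP p d with hd₁
        set d₂ := d - d₁ with hd₂
        have hd₁0 : 0 ≤ d₁ := projP_nonneg hd0
        have hd₂0 : 0 ≤ d₂ := sub_nonneg.2 (projP_le p d)
        have hd₁band : projP p d₁ = d₁ := projP_idem hd0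
        have hd₂p : d₂ ⊓ p = 0 := projP_compl_disj hp0 hd0
        have hd₁d₂ : d₁ ⊓ d₂ = 0 := by
          rw [inf_comm]
          exact disj_of_band hp0 hd₁0 hd₂0 hd₁band hd₂p
        have hdeq : d = d₁ + d₂ := by rw [hd₂]; abel
        -- d₂ lies in the band of q
        have hd₂band : projP q d₂ = d₂ := by
          have hband₂ : projP (p ⊔ q) d₂ = d₂ :=
            band_hereditary hb0 hd₂0 (sub_le_self _ hd₁0) hbandz
          refine le_antisymm (projP_le q d₂) ?_
          have hsup : projP (p ⊔ q) d₂ ≤ projP q d₂ := by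
            refine csSup_le (Set.range_nonempty _) ?_
            rintro w ⟨n, rfl⟩
            have hble : p ⊔ q ≤ p + q := sup_le (le_add_of_nonneg_right hq0)
              (le_add_of_nonneg_left hp0)
            have h1 : d₂ ⊓ n • (p ⊔ q) ≤ d₂ ⊓ (n • p + n • q) := by
              refine inf_le_inf_left _ ?_
              rw [← smul_add]
              exact nsmul_le_nsmul_right hble n
            have h2 : d₂ ⊓ (n • p + n • q) ≤ d₂ ⊓ (n • p) + d₂ ⊓ (n • q) :=
              my_inf_add_le hd₂0 (nsmul_nonneg hp0 n) (nsmul_nonneg hq0 n)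
            have h3 : d₂ ⊓ (n • p) = 0 := my_disjoint_nsmul hd₂0 hp0 hd₂p n
            calc d₂ ⊓ n • (p ⊔ q) ≤ d₂ ⊓ (n • p) + d₂ ⊓ (n • q) := h1.trans h2
              _ = d₂ ⊓ (n • q) := by rw [h3, zero_add]
              _ ≤ projP q d₂ := le_projP q d₂ n
          calc d₂ = projP (p ⊔ q) d₂ := hband₂.symm
            _ ≤ projP q d₂ := hsup
        -- claim 1
        have claim1 : ε • projP d₁ (T e) ≤ projP d₁ (T z) := by
          have hneg : (T z - ε • T e)⁻ ⊓ d₁ = 0 := by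
            refine disj_of_band hp0 hd₁0 (negPart_nonneg _) hd₁band ?_
            rw [inf_comm]; exact posPart_inf_negPart_eq_zero _
          have h0 : projP d₁ ((T z - ε • T e)⁻) = 0 :=
            projP_zero_of _ fun n => my_disjoint_nsmul (negPart_nonneg _) hd₁0 hneg n
          have e1 : ε • T e + (T z - ε • T e) = T z := by abel
          have h1 : proj d₁ (T z) = proj d₁ (ε • T e) + proj d₁ (T z - ε • T e) := by
            rw [← proj_add hd₁0, e1]
          have h2 : proj d₁ (T z - ε • T e) = projP d₁ p := by
            show projP d₁ ((T z - ε • T e)⁺) - projP d₁ ((T z - ε • T e)⁻) = projP d₁ p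
            rw [h0, sub_zero, hp]
          have h3 : 0 ≤ proj d₁ (T z - ε • T e) := by
            rw [h2]; exact projP_nonneg hp0
          have h4 : ε • projP d₁ (T e) ≤ proj d₁ (ε • T e) := by
            rw [proj_eq_projP hd₁0 (my_smul_nonneg hε0.le (hTpos e))]
            exact projP_smul hε0 hε1 hd₁0 (hTpos e)
          have h5 : proj d₁ (T z) = projP d₁ (T z) := proj_eq_projP hd₁0 (hTpos z)
          calc ε • projP d₁ (T e) ≤ proj d₁ (ε • T e) + proj d₁ (T z - ε • T e) :=
                le_add_of_le_of_nonneg h4 h3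
            _ = proj d₁ (T z) := h1.symm
            _ = projP d₁ (T z) := h5
        -- claim 2
        have claim2 : ε • projP d₂ (S e) ≤ projP d₂ (S (e - z)) := by
          have hneg : (S (e - z) - ε • S e)⁻ ⊓ d₂ = 0 := by
            refine disj_of_band hq0 hd₂0 (negPart_nonneg _) hd₂band ?_
            rw [inf_comm]; exact posPart_inf_negPart_eq_zero _
          have h0 : projP d₂ ((S (e - z) - ε • S e)⁻) = 0 :=
            projP_zero_of _ fun n => my_disjoint_nsmul (negPart_nonneg _) hd₂0 hneg n
          have e1 : ε • S e + (S (e - z) - ε • S e) = S (e - z) := by abel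
          have h1 : proj d₂ (S (e - z)) = proj d₂ (ε • S e) + proj d₂ (S (e - z) - ε • S e) := by
            rw [← proj_add hd₂0, e1]
          have h2 : proj d₂ (S (e - z) - ε • S e) = projP d₂ q := by
            show projP d₂ ((S (e - z) - ε • S e)⁺) - projP d₂ ((S (e - z) - ε • S e)⁻) =
              projP d₂ q
            rw [h0, sub_zero, hq]
          have h3 : 0 ≤ proj d₂ (S (e - z) - ε • S e) := by
            rw [h2]; exact projP_nonneg hq0
          have h4 : ε • projP d₂ (S e) ≤ proj d₂ (ε • S e) := by
            rw [proj_eq_projP hd₂0 (my_smul_nonneg hε0.le (hSpos e))]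
            exact projP_smul hε0 hε1 hd₂0 (hSpos e)
          have h5 : proj d₂ (S (e - z)) = projP d₂ (S (e - z)) := proj_eq_projP hd₂0 (hSpos _)
          calc ε • projP d₂ (S e) ≤ proj d₂ (ε • S e) + proj d₂ (S (e - z) - ε • S e) :=
                le_add_of_le_of_nonneg h4 h3
            _ = proj d₂ (S (e - z)) := h1.symm
            _ = projP d₂ (S (e - z)) := h5
        -- chain
        have hsplit : projP d hh = projP d₁ hh + projP d₂ hh := by
          conv_lhs => rw [hdeq]
          exact projP_split hd₁0 hd₂0 hd₁d₂ hh0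
        calc ε • projP d hh = ε • projP d₁ hh + ε • projP d₂ hh := by
              rw [hsplit, smul_add]
          _ ≤ ε • projP d₁ (T e) + ε • projP d₂ (S e) := add_le_add
              (smul_le_smul_of_nonneg_left (projP_mono inf_le_left) hε0.le)
              (smul_le_smul_of_nonneg_left (projP_mono inf_le_right) hε0.le)
          _ ≤ projP d₁ (T z) + projP d₂ (S (e - z)) := add_le_add claim1 claim2
          _ ≤ T z + S (e - z) := add_le_add (projP_le _ _) (projP_le _ _)
      have hle0 : ε • projP d hh ≤ 0 := hinf _ hγ
      have hph0 : projP d hh = 0 := by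
        have h1 : projP d hh ≤ 0 := by
          have h2 := smul_le_smul_of_nonneg_left hle0 (inv_nonneg.2 hε0.le)
          rwa [inv_smul_smul₀ hε0.ne', smul_zero] at h2
        exact le_antisymm h1 (projP_nonneg hh0)
      have hdh : d ⊓ hh = 0 := by
        refine le_antisymm ?_ (le_inf hd0 hh0)
        have h1 : hh ⊓ (1 : ℕ) • d ≤ projP d hh := le_projP d hh 1
        rw [one_smul] at h1
        rw [inf_comm]
        exact h1.trans hph0.le
      have hzero : ∀ n : ℕ, d ⊓ n • (S e) = 0 := by
        intro n
        set v := d ⊓ n • S e with hv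
        have hv0 : 0 ≤ v := le_inf hd0 (nsmul_nonneg (hSpos e) n)
        refine my_sup_trick (Set.range_nonempty _) (projP_bdd (T e) d) hv0 ?_ ?_
        · show v ≤ projP (T e) d
          rw [hdTe]
          exact inf_le_left
        · rintro w ⟨m, rfl⟩
          refine ⟨le_inf hd0 (nsmul_nonneg (hTpos e) m), ?_⟩
          set N := max n m with hN
          have h1 : v ⊓ (d ⊓ m • T e) ≤ d ⊓ (N • T e ⊓ N • S e) := by
            refine le_inf (inf_le_left.trans inf_le_left) (le_inf ?_ ?_)
            · exact inf_le_right.trans (inf_le_right.trans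
                (nsmul_le_nsmul_left (hTpos e) (le_max_right n m)))
            · exact inf_le_left.trans (inf_le_right.trans
                (nsmul_le_nsmul_left (hSpos e) (le_max_left n m)))
          have h2 : N • T e ⊓ N • S e = N • hh := my_nsmul_inf _ _ N
          have h3 : d ⊓ N • hh = 0 := my_disjoint_nsmul hd0 hh0 hdh N
          refine le_antisymm ?_ (le_inf hv0 (le_inf hd0 (nsmul_nonneg (hTpos e) m)))
          calc v ⊓ (d ⊓ m • T e) ≤ d ⊓ (N • T e ⊓ N • S e) := h1
            _ = d ⊓ N • hh := by rw [h2]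
            _ = 0 := h3
      have : d = 0 := by
        rw [← hdSe]
        exact projP_zero_of _ hzero
      exact hdne this
  -- Zorn's lemma
  set 𝒮 : Set (Set F) := {M | (∀ c ∈ M, Good c) ∧ M.Pairwise fun a b => a ⊓ b = 0} with h𝒮
  obtain ⟨M, hM⟩ : ∃ M, Maximal (· ∈ 𝒮) M := by
    refine zorn_subset 𝒮 ?_
    intro ch hch hchain
    refine ⟨⋃₀ ch, ⟨?_, ?_⟩, fun s hs => Set.subset_sUnion_of_mem hs⟩
    · rintro c ⟨s, hs, hcs⟩
      exact (hch hs).1 c hcs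
    · rintro a ⟨s, hs, has⟩ b ⟨t, ht, hbt⟩ hab
      rcases hchain.total hs ht with h | h
      · exact (hch ht).2 (h has) hbt hab
      · exact (hch hs).2 has (h hbt) hab
  have hMgood : ∀ c ∈ M, Good c := hM.1.1
  -- the index type and data
  refine ⟨Option M, (fun o => Option.rec (fun _ => 0) (fun c => proj (c : F)) o),
    (fun o => Option.rec 0 (fun c => (hMgood c c.2).2.choose) o), ?_, ?_, ?_, ?_, ?_⟩
  · rintro (_ | c)
    · exact ⟨fun x y => (add_zero 0).symm, fun x => rfl, fun x hx => ⟨le_rfl, hx⟩⟩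
    · exact isBandProj_proj (hMgood c c.2).1
  · rintro (_ | c) (_ | c') hne x hx
    · exact absurd rfl hne
    · show (0:F) ⊓ proj (c' : F) x = 0
      refine inf_eq_left.2 ?_
      rw [proj_eq_projP (hMgood c' c'.2).1 hx]
      exact projP_nonneg hx
    · show proj (c : F) x ⊓ (0:F) = 0
      refine inf_eq_right.2 ?_
      rw [proj_eq_projP (hMgood c c.2).1 hx]
      exact projP_nonneg hx
    · show proj (c : F) x ⊓ proj (c' : F) x = 0
      have hcc' : (c : F) ≠ (c' : F) := by
        intro hcc
        exact hne (by rw [Subtype.ext hcc])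
      have hdisj : (c : F) ⊓ (c' : F) = 0 := hM.1.2 c.2 c'.2 hcc'
      rw [proj_eq_projP (hMgood c c.2).1 hx, proj_eq_projP (hMgood c' c'.2).1 hx]
      exact projP_disj (hMgood c c.2).1 (hMgood c' c'.2).1 hdisj hx
  · intro x hx
    constructor
    · rintro w ⟨(_ | c), rfl⟩
      · exact hx
      · show proj (c : F) x ≤ x
        rw [proj_eq_projP (hMgood c c.2).1 hx]
        exact projP_le _ _
    · intro w hw
      set d := x - w ⊓ x with hd
      have hd0 : 0 ≤ d := sub_nonneg.2 inf_le_right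
      have hdc : ∀ c (hc : c ∈ M), d ⊓ c = 0 := by
        intro c hc
        have h1 : proj c x ≤ w := hw ⟨some ⟨c, hc⟩, rfl⟩
        have h2 : projP c x ≤ w ⊓ x := by
          rw [← proj_eq_projP (hMgood c hc).1 hx]
          exact le_inf h1 (by rw [proj_eq_projP (hMgood c hc).1 hx]; exact projP_le _ _)
        have h3 : d ≤ x - projP c x := sub_le_sub_left h2 x
        have h4 : (x - projP c x) ⊓ c = 0 := projP_compl_disj (hMgood c hc).1 hx
        refine le_antisymm ?_ (le_inf hd0 (hMgood c hc).1)
        exact (inf_le_inf_right c h3).trans h4.le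
      have hdz : d = 0 := by
        by_contra hdne
        obtain ⟨c', hc'0, hc'd, hc'ne, hc'good⟩ := key d hd0 hdne
        have hc'M : c' ∉ M := by
          intro hin
          refine hc'ne (le_antisymm ?_ hc'0)
          calc c' = c' ⊓ c' := (inf_idem c').symm
            _ ≤ d ⊓ c' := inf_le_inf_right c' hc'd
            _ = 0 := hdc c' hin
        have hbig : insert c' M ∈ 𝒮 := by
          constructor
          · rintro c (rfl | hc)
            · exact hc'good
            · exact hMgood c hc
          · rw [Set.pairwise_insert]
            refine ⟨hM.1.2, fun b hb _ => ?_⟩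
            have h1 : c' ⊓ b = 0 := by
              refine le_antisymm ?_ (le_inf hc'0 (hMgood b hb).1)
              calc c' ⊓ b ≤ d ⊓ b := inf_le_inf_right b hc'd
                _ = 0 := hdc b hb
            exact ⟨h1, by rw [inf_comm]; exact h1⟩
        have := hM.2 hbig (Set.subset_insert c' M)
        exact hc'M (this (Set.mem_insert c' M))
      have : x = w ⊓ x := by
        have := sub_eq_zero.1 hdz
        exact this
      exact this.le.trans inf_le_left
  · rintro (_ | c)
    · exact frag_zero e
    · exact (hMgood c c.2).2.choose_spec.1
  · rintro (_ | c)
    · constructor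
      · exact my_smul_nonneg hε0.le (hTpos e)
      · exact my_smul_nonneg hε0.le (hSpos e)
    · exact ⟨(hMgood c c.2).2.choose_spec.2.1, (hMgood c c.2).2.choose_spec.2.2⟩
end Part2

section Part3
variable {E F : Type*} [Lattice E] [AddCommGroup E]
    [CovariantClass E E (· + ·) (· ≤ ·)]
    [ConditionallyCompleteLattice F] [AddCommGroup F]
    [CovariantClass F F (· + ·) (· ≤ ·)] [Module ℝ F] [PosSMulMono ℝ F]

theorem part3 (T S : E → F) (hTpos : ∀ x, 0 ≤ T x) (hSpos : ∀ x, 0 ≤ S x)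
    (hcond : ∀ e : E, ∀ ε : ℝ, 0 < ε →
      ∃ (ι : Type) (ρ : ι → F → F) (ea : ι → E),
        (∀ α, IsBandProj (ρ α)) ∧
        (∀ α β, α ≠ β → ∀ x : F, 0 ≤ x → ρ α x ⊓ ρ β x = 0) ∧
        (∀ x : F, 0 ≤ x → IsLUB (Set.range fun α => ρ α x) x) ∧
        (∀ α, Fragment (ea α) e) ∧
        ∀ α, ρ α (T (ea α)) ≤ ε • T e ∧ ρ α (S (e - ea α)) ≤ ε • S e) :
    UDisjointPos T S := by
  intro R hR hRT hRS x
  have hu : (0:F) ≤ T x + S x := add_nonneg (hTpos x) (hSpos x)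
  have harch : ∀ ε : ℝ, 0 < ε → R x ≤ ε • (T x + S x) := by
    intro ε hε
    obtain ⟨ι, ρ, ea, hproj, hdisj, hlub, hfrag, hbnd⟩ := hcond x ε hε
    have hRx : ∀ α, R x = R (ea α) + R (x - ea α) := by
      intro α
      have h := hR.1 (ea α) (x - ea α) (hfrag α)
      have e1 : ea α + (x - ea α) = x := by abel
      rw [e1] at h
      exact h
    have hmono : ∀ α, ∀ a b : F, a ≤ b → ρ α a ≤ ρ α b := by
      intro α a b hab
      have h1 : ρ α b - ρ α a = ρ α (b - a) := by
        have h2 := (hproj α).1 (b - a) a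
        have e1 : b - a + a = b := by abel
        rw [e1] at h2
        rw [h2]; abel
      rw [← sub_nonneg, h1]
      exact ((hproj α).2.2 _ (sub_nonneg.2 hab)).1
    have hbound : ∀ α, ρ α (R x) ≤ ε • T x + ε • S x := by
      intro α
      rw [hRx α, (hproj α).1]
      exact add_le_add ((hmono α _ _ (hRT (ea α))).trans (hbnd α).1)
        ((hmono α _ _ (hRS (x - ea α))).trans (hbnd α).2)
    have hRxu : R x ≤ T x + S x := (hRT x).trans (le_add_of_nonneg_right (hSpos x))
    have hub : ∀ α, ρ α (T x + S x) ≤ ε • T x + ε • S x + ((T x + S x) - R x) := by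
      intro α
      have h1 : ρ α (T x + S x) = ρ α (R x) + ρ α ((T x + S x) - R x) := by
        rw [← (hproj α).1]
        congr 1
        abel
      rw [h1]
      exact add_le_add (hbound α) ((hproj α).2.2 _ (sub_nonneg.2 hRxu)).2
    have hlub_u := hlub (T x + S x) hu
    have h4 : (T x + S x) ≤ ε • T x + ε • S x + ((T x + S x) - R x) :=
      hlub_u.2 (by rintro w ⟨α, rfl⟩; exact hub α)
    have h5 : R x ≤ ε • T x + ε • S x := by
      have h3 : (T x + S x) - ((T x + S x) - R x) = R x := by abel
      rw [← h3]
      exact sub_le_iff_le_add.2 h4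
    rwa [← smul_add] at h5
  exact my_smul_arch hu harch
end Part3

/-- Two positive abstract Uryson operators `T, S : E → F` (`F` Dedekind complete) are
disjoint iff for every `e ∈ E` and `ε > 0` there are a partition of unity `(ρ α)`
(a family of pairwise disjoint band projections on `F` with supremum the identity)
and a family `(e α)` of fragments of `e` with `ρ α (T (e α)) ≤ ε • T e` and
`ρ α (S (e - e α)) ≤ ε • S e` for every `α`. -/
theorem stmt6 {E F : Type} [Lattice E] [AddCommGroup E]
    [CovariantClass E E (· + ·) (· ≤ ·)] [Module ℝ E]
    [ConditionallyCompleteLattice F] [AddCommGroup F]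
    [CovariantClass F F (· + ·) (· ≤ ·)] [Module ℝ F] [PosSMulMono ℝ F]
    (T S : E → F) (hT : Uryson T) (hTpos : ∀ x, 0 ≤ T x)
    (hS : Uryson S) (hSpos : ∀ x, 0 ≤ S x) :
    UDisjointPos T S ↔
      ∀ e : E, ∀ ε : ℝ, 0 < ε →
        ∃ (ι : Type) (ρ : ι → F → F) (ea : ι → E),
          (∀ α, IsBandProj (ρ α)) ∧
          (∀ α β, α ≠ β → ∀ x : F, 0 ≤ x → ρ α x ⊓ ρ β x = 0) ∧
          (∀ x : F, 0 ≤ x → IsLUB (Set.range fun α => ρ α x) x) ∧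
          (∀ α, Fragment (ea α) e) ∧
          ∀ α, ρ α (T (ea α)) ≤ ε • T e ∧ ρ α (S (e - ea α)) ≤ ε • S e := by
  constructor
  · intro hdisj e ε hε0
    have hε'0 : (0:ℝ) < min ε 1 := lt_min hε0 one_pos
    have hε'1 : min ε 1 ≤ 1 := min_le_right ε 1
    obtain ⟨ι, ρ, ea, h1, h2, h3, h4, h5⟩ := part2 T S hT hTpos hS hSpos e
      (fun c hc => part1 T S hT hTpos hS hSpos hdisj e c hc) (min ε 1) hε'0 hε'1
    refine ⟨ι, ρ, ea, h1, h2, h3, h4, fun α => ⟨?_, ?_⟩⟩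
    · exact (h5 α).1.trans (my_smul_mono_scalar (min_le_left ε 1) (hTpos e))
    · exact (h5 α).2.trans (my_smul_mono_scalar (min_le_left ε 1) (hSpos e))
  · exact part3 T S hTpos hSpos
end
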